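/- Fix β ∈ ℤ. The grove polynomials satisfy: G_∅^{(β)} = 1; ct G_F^{(β)} = 0 for every indexed forest F ≠ ∅; and for every indexed forest F and every i ≥ 1, π̃_i G_F^{(β)} = G_{F/i}^{(β)} if i ∈ QDes(F), while π̃_i G_F^{(β)} = −β · R_i(G_F^{(β)}) if i ∉ QDes(F). -/

import Mathlib

open MvPolynomial

/-- The ambient ring `R = ℤ[x₁, x₂, …]`, with variables indexed by positive integers. -/
abbrev MyR : Type := MvPolynomial ℕ+ ℤ

/-- The Bergeron–Sottile operator `R_i`: the `ℤ`-algebra map with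
`x_j ↦ x_j` for `j < i`, `x_i ↦ 0`, and `x_j ↦ x_{j-1}` for `j > i`. -/
noncomputable def BS (i : ℕ+) : MyR →ₐ[ℤ] MyR :=
  aeval fun j : ℕ+ =>
    if j < i then (X j : MyR) else if j = i then 0 else X (j - 1)

/-- Plane binary trees. -/
inductive BTree : Type
  | leaf : BTree
  | node : BTree → BTree → BTree
  deriving DecidableEq

namespace BTree

def numLeaves : BTree → ℕ+
  | leaf => 1
  | node l r => l.numLeaves + r.numLeaves

/-- Number of internal nodes. -/
def size : BTree → ℕ
  | leaf => 0
  | node l r => l.size + r.size + 1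

/-- `qdesSet T a` : the QDes positions contributed by a tree `T` whose leftmost
leaf carries the label `a` (leaves are labeled consecutively left-to-right). -/
def qdesSet : BTree → ℕ+ → Set ℕ+
  | leaf, _ => ∅
  | node leaf leaf, a => {a}
  | node l r, a => l.qdesSet a ∪ r.qdesSet (a + l.numLeaves)

/-- `trim T a i` : replace the terminal node whose leaf-children are labeled
`i`, `i+1` by a single leaf (`a` = label of the leftmost leaf of `T`). -/
def trim : BTree → ℕ+ → ℕ+ → BTree
  | leaf, _, _ => leaf
  | node l r, a, i =>
    if l = leaf ∧ r = leaf ∧ a = i then leaf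
    else node (l.trim a i) (r.trim (a + l.numLeaves) i)

/-- `rightAt T a i = true` iff the terminal node of `T` whose leaf-children are
labeled `i`, `i+1` is the right child of its parent. -/
def rightAt : BTree → ℕ+ → ℕ+ → Bool
  | leaf, _, _ => false
  | node l r, a, i =>
    l.rightAt a i || r.rightAt (a + l.numLeaves) i ||
      (decide (r = node leaf leaf) && decide (a + l.numLeaves = i))

end BTree

/-- An indexed forest: a sequence of plane binary trees, all but finitely many
of which are the single leaf. -/
structure IndexedForest : Type where
  trees : ℕ → BTree
  finite : {n : ℕ | trees n ≠ BTree.leaf}.Finite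

namespace IndexedForest

noncomputable def supp (F : IndexedForest) : Finset ℕ := F.finite.toFinset

/-- `|F|`, the number of internal nodes of `F`. -/
noncomputable def size (F : IndexedForest) : ℕ := ∑ n ∈ F.supp, (F.trees n).size

/-- The label of the leftmost leaf of the `n`-th tree (trees indexed from `0`;
leaves are labeled `1, 2, 3, …` from left to right across the trees). -/
def firstLeaf (F : IndexedForest) (n : ℕ) : ℕ+ :=
  ⟨1 + ∑ m ∈ Finset.range n, ((F.trees m).numLeaves : ℕ), by omega⟩

/-- `QDes(F)`. -/
def qdes (F : IndexedForest) : Set ℕ+ :=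
  ⋃ n : ℕ, (F.trees n).qdesSet (F.firstLeaf n)

/-- `F/i`, the forest obtained by replacing the terminal node with leaf-children
`i`, `i+1` by a single leaf. -/
def trim (F : IndexedForest) (i : ℕ+) : IndexedForest where
  trees := fun n => (F.trees n).trim (F.firstLeaf n) i
  finite := F.finite.subset (fun n hn => by
    simp only [Set.mem_setOf_eq] at hn ⊢
    intro h
    apply hn
    rw [h]
    rfl)

/-- The empty forest `∅`. -/
protected def empty : IndexedForest :=
  ⟨fun _ => BTree.leaf, Set.finite_empty.subset (fun _ hn => (hn rfl).elim)⟩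

/-- The terminal node of `F` at `i ∈ QDes F` is a right child. -/
def rightAt (F : IndexedForest) (i : ℕ+) : Prop :=
  ∃ n : ℕ, (F.trees n).rightAt (F.firstLeaf n) i = true

open Classical in
/-- `min QDes(F)` (defaulting to `1` if `QDes(F)` is empty, i.e. `F = ∅`). -/
noncomputable def minQDes (F : IndexedForest) : ℕ+ :=
  if h : ((fun i : ℕ+ => (i : ℕ)) '' F.qdes).Nonempty then
    ⟨sInf ((fun i : ℕ+ => (i : ℕ)) '' F.qdes), by
      obtain ⟨i, _, hieq⟩ := Nat.sInf_mem h
      exact hieq ▸ i.2⟩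
  else 1

end IndexedForest

/-- Set-valued labeled plane binary trees: each internal node carries a finite
set of positive integers. -/
inductive LTree : Type
  | leaf : LTree
  | node : Finset ℕ+ → LTree → LTree → LTree

namespace LTree

/-- Underlying unlabeled tree. -/
def shape : LTree → BTree
  | leaf => BTree.leaf
  | node _ l r => BTree.node l.shape r.shape

/-- The label set of the top of a subtree; a leaf with label `a` counts as the
singleton `{a}`. -/
def headSet : LTree → ℕ+ → Finset ℕ+
  | leaf, a => {a}
  | node S _ _, _ => S

/-- Compatibility of a set-valued labeling: every label set is nonempty,
`max κ(v) ≤ min κ(v_L)` and `max κ(v) < min κ(v_R)`.  The parameter `a` is the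
label of the leftmost leaf of the subtree. -/
def Compatible : LTree → ℕ+ → Prop
  | leaf, _ => True
  | node S l r, a =>
    S.Nonempty ∧ l.Compatible a ∧ r.Compatible (a + l.shape.numLeaves) ∧
    (∀ s ∈ S, ∀ t ∈ l.headSet a, s ≤ t) ∧
    (∀ s ∈ S, ∀ t ∈ r.headSet (a + l.shape.numLeaves), s < t)

/-- The monomial `x_κ` contributed by a labeled tree. -/
noncomputable def weight : LTree → MyR
  | leaf => 1
  | node S l r => (∏ j ∈ S, (X j : MyR)) * l.weight * r.weight

/-- `|κ|`, the total cardinality of the label sets. -/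
def lsize : LTree → ℕ
  | leaf => 0
  | node S l r => S.card + l.lsize + r.lsize

/-- All label sets are singletons. -/
def allSingle : LTree → Prop
  | leaf => True
  | node S l r => S.card = 1 ∧ l.allSingle ∧ r.allSingle

end LTree

/-- The type of compatible set-valued labelings of the indexed forest `F`. -/
def IndexedForest.Labelings (F : IndexedForest) : Type :=
  {κ : ℕ → LTree //
    (∀ n, (κ n).shape = F.trees n) ∧ ∀ n, (κ n).Compatible (F.firstLeaf n)}

/-- The grove polynomial `G_F^{(β)} = Σ_κ β^{|κ|-|F|} x_κ`. -/
noncomputable def groveP (β : ℤ) (F : IndexedForest) : MyR :=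
  ∑ᶠ κ : F.Labelings,
    C (β ^ ((∑ n ∈ F.supp, (κ.1 n).lsize) - F.size)) * ∏ n ∈ F.supp, (κ.1 n).weight

/-- The forest polynomial `𝔓_F`: the sum of `x_κ` over compatible set-valued
labelings all of whose label sets are singletons. -/
noncomputable def forestPoly (F : IndexedForest) : MyR :=
  ∑ᶠ κ : {κ : F.Labelings // ∀ n, (κ.1 n).allSingle},
    ∏ n ∈ F.supp, (κ.1.1 n).weight

open Classical in
/-- Fuel-indexed recursion implementing the grove extractor. -/
noncomputable def extractAux (T : ℕ+ → MyR → MyR) (β : ℤ) :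
    ℕ → IndexedForest → MyR → MyR
  | 0, _, f => f
  | k + 1, F, f =>
    if F = IndexedForest.empty then f
    else
      extractAux T β k (F.trim F.minQDes)
        (if F.rightAt F.minQDes then (1 + C β * X F.minQDes) * T F.minQDes f
         else T F.minQDes f)

/-- The grove extractor `Ĥ_F`: `Ĥ_∅ = id`, and for `F ≠ ∅` and `i = min QDes F`,
`Ĥ_F = Ĥ_{F/i} ∘ Ĥ^R_i` if the terminal node at `i` is a right child and
`Ĥ_F = Ĥ_{F/i} ∘ Ĥ^L_i` otherwise, where `Ĥ^L_i = T_i` and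
`Ĥ^R_i = (1 + βx_i)·T_i`.  (The recursion is implemented with fuel `|F|`, using
that `|F/i| = |F| - 1`.) -/
noncomputable def extract (T : ℕ+ → MyR → MyR) (β : ℤ) (F : IndexedForest) :
    MyR → MyR :=
  extractAux T β F.size F

/-- `S_∞`: permutations of `{1, 2, …}` fixing all but finitely many points. -/
def SPerm : Type := {w : Equiv.Perm ℕ+ // {x : ℕ+ | w x ≠ x}.Finite}

namespace SPerm

/-- The identity permutation. -/
protected def one : SPerm :=
  ⟨1, Set.finite_empty.subset (fun _ hx => (hx rfl).elim)⟩

/-- `w * s_i` where `s_i` is the transposition of `i` and `i+1`. -/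
noncomputable def mulSwap (w : SPerm) (i : ℕ+) : SPerm :=
  ⟨w.1 * Equiv.swap i (i + 1), by
    apply ((w.2.union (Set.finite_singleton i)).union
      (Set.finite_singleton (i + 1))).subset
    intro x hx
    simp only [Set.mem_setOf_eq, Equiv.Perm.mul_apply] at hx
    simp only [Set.mem_union, Set.mem_setOf_eq, Set.mem_singleton_iff]
    by_cases h1 : x = i
    · exact Or.inl (Or.inr h1)
    by_cases h2 : x = i + 1
    · exact Or.inr h2
    · exact Or.inl (Or.inl (by rwa [Equiv.swap_apply_of_ne_of_ne h1 h2] at hx))⟩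

/-- `ℓ(w)`, the number of inversions. -/
noncomputable def len (w : SPerm) : ℕ :=
  Set.ncard {p : ℕ+ × ℕ+ | p.1 < p.2 ∧ w.1 p.2 < w.1 p.1}

/-- `Des(w) = {i ≥ 1 : w(i) > w(i+1)}`. -/
def des (w : SPerm) : Set ℕ+ := {i : ℕ+ | w.1 (i + 1) < w.1 i}

end SPerm

/-- `f` is quasisymmetric in `x₁, …, xₙ`: no variable `x_j` with `j > n`
occurs, and coefficients of monomials with the same exponent word on strictly
increasing variable sequences in `{1, …, n}` agree. -/
def IsQuasisym (n : ℕ+) (f : MyR) : Prop :=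
  (∀ j : ℕ+, n < j → ∀ m ∈ f.support, m j = 0) ∧
  ∀ k : ℕ, 0 < k → ∀ a : Fin k → ℕ+, ∀ u v : Fin k → ℕ+,
    StrictMono u → StrictMono v → (∀ m, u m ≤ n) → (∀ m, v m ≤ n) →
    coeff (∑ m, Finsupp.single (u m) ((a m : ℕ))) f =
      coeff (∑ m, Finsupp.single (v m) ((a m : ℕ))) f

/-- The zigzag (chain) tree encoded by a list of booleans: the internal nodes
form a chain `v₁, …, v_k` (`k` = length + 1) and the `m`-th entry records
whether `v_{m+1}` is the right child of `v_m`. -/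
def chainTree : List Bool → BTree
  | [] => BTree.node BTree.leaf BTree.leaf
  | b :: rest =>
    if b then BTree.node BTree.leaf (chainTree rest)
    else BTree.node (chainTree rest) BTree.leaf

/-! ### Auxiliary development -/

open Finset

-- PNat helpers
lemma pn_one_lt {a : ℕ+} (h : (1:ℕ) < a) : (1:ℕ+) < a := by
  exact_mod_cast h

lemma coe_sub_one {m : ℕ+} (h : (1:ℕ) < m) : ((m - 1 : ℕ+) : ℕ) = (m : ℕ) - 1 := by
  have h' : (1:ℕ+) < m := by exact_mod_cast h
  rw [PNat.sub_coe, if_pos h']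
  simp

lemma padd_sub_one (m : ℕ+) : m + 1 - 1 = m := by
  apply PNat.coe_injective
  have h : (1:ℕ) < ((m+1:ℕ+):ℕ) := by
    rw [PNat.add_coe, PNat.one_coe]
    have := m.pos
    omega
  rw [coe_sub_one h, PNat.add_coe, PNat.one_coe]
  omega

lemma psub_add_one {m : ℕ+} (h : (1:ℕ) < m) : m - 1 + 1 = m := by
  apply PNat.coe_injective
  rw [PNat.add_coe, coe_sub_one h, PNat.one_coe]
  omega

lemma mem_IccP {m b a : ℕ+} : m ∈ Finset.Icc b a ↔ (b:ℕ) ≤ m ∧ (m:ℕ) ≤ a := by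
  rw [Finset.mem_Icc]; exact_mod_cast Iff.rfl

lemma mem_IcoP {m b a : ℕ+} : m ∈ Finset.Ico b a ↔ (b:ℕ) ≤ m ∧ (m:ℕ) < a := by
  rw [Finset.mem_Ico]; exact_mod_cast Iff.rfl

-- BS basics
lemma BS_C (i : ℕ+) (z : ℤ) : BS i (MvPolynomial.C z) = MvPolynomial.C z := by
  simp [BS, MvPolynomial.aeval_C, MvPolynomial.algebraMap_eq]

lemma BS_X (i j : ℕ+) :
    BS i (MvPolynomial.X j) =
      if j < i then MvPolynomial.X j else if j = i then 0 else MvPolynomial.X (j - 1) := by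
  simp [BS]

lemma BS_X_lt {i j : ℕ+} (h : j < i) : BS i (MvPolynomial.X j) = MvPolynomial.X j := by
  rw [BS_X, if_pos h]

lemma BS_X_self (i : ℕ+) : BS i (MvPolynomial.X i) = 0 := by
  rw [BS_X, if_neg (lt_irrefl i), if_pos rfl]

lemma BS_X_gt {i j : ℕ+} (h : i < j) : BS i (MvPolynomial.X j) = MvPolynomial.X (j - 1) := by
  rw [BS_X, if_neg (by exact not_lt_of_gt h), if_neg (by exact ne_of_gt h)]

lemma BS_one_add (i : ℕ+) (β : ℤ) (j : ℕ+) :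
    BS i (1 + MvPolynomial.C β * MvPolynomial.X j) =
      1 + MvPolynomial.C β * BS i (MvPolynomial.X j) := by
  rw [map_add, map_mul, map_one, BS_C]

-- interval sum helpers
lemma Icc_insert_top {b e : ℕ+} (h : b ≤ e + 1) :
    Finset.Icc b (e + 1) = insert (e + 1) (Finset.Icc b e) := by
  ext m
  simp only [mem_IccP, Finset.mem_insert, mem_IccP]
  constructor
  · rintro ⟨h1, h2⟩
    by_cases hm : m = e + 1
    · exact Or.inl hm
    · refine Or.inr ⟨h1, ?_⟩
      have : (m:ℕ) ≠ ((e+1:ℕ+):ℕ) := fun hc => hm (PNat.coe_injective hc)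
      rw [PNat.add_coe, PNat.one_coe] at h2 this
      omega
  · rintro (rfl | ⟨h1, h2⟩)
    · exact ⟨by exact_mod_cast h, le_refl _⟩
    · refine ⟨h1, ?_⟩
      rw [PNat.add_coe, PNat.one_coe]
      omega

lemma Ico_insert_top {b e : ℕ+} (h : b ≤ e + 1) :
    Finset.Ico b (e + 1 + 1) = insert (e + 1) (Finset.Ico b (e + 1)) := by
  ext m
  simp only [mem_IcoP, Finset.mem_insert]
  have hb : (b:ℕ) ≤ (e:ℕ) + 1 := by exact_mod_cast h
  constructor
  · rintro ⟨h1, h2⟩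
    by_cases hm : m = e + 1
    · exact Or.inl hm
    · have : (m:ℕ) ≠ ((e+1:ℕ+):ℕ) := fun hc => hm (PNat.coe_injective hc)
      push_cast at h2 this ⊢
      exact Or.inr ⟨h1, by omega⟩
  · rintro (rfl | ⟨h1, h2⟩)
    · simp only [PNat.add_coe, PNat.one_coe]
      omega
    · simp only [PNat.add_coe, PNat.one_coe] at h2 ⊢
      exact ⟨h1, by omega⟩

section sums
variable {M : Type*} [AddCommMonoid M]

lemma sum_dropi {b a i : ℕ+} (hb : b ≤ i) (hia : i ≤ a) (ha : (1:ℕ) < a)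
    (f g : ℕ+ → M)
    (hlt : ∀ m, b ≤ m → m < i → f m = g m)
    (hgt : ∀ m, i < m → m ≤ a → f m = g (m - 1))
    (hi : f i = 0) :
    ∑ m ∈ Finset.Icc b a, f m = ∑ m ∈ Finset.Icc b (a - 1), g m := by
  have hisrc : i ∈ Finset.Icc b a := mem_IccP.2 ⟨by exact_mod_cast hb, by exact_mod_cast hia⟩
  rw [← Finset.sum_erase_add _ _ hisrc, hi, add_zero]
  apply Finset.sum_nbij' (i := fun m => if m < i then m else m - 1)
    (j := fun m => if m < i then m else m + 1)
  · intro m hm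
    simp only [Finset.mem_erase, mem_IccP] at hm
    obtain ⟨hne, h1, h2⟩ := hm
    have hne' : (m:ℕ) ≠ (i:ℕ) := fun hc => hne (PNat.coe_injective hc)
    by_cases hmi : m < i
    · rw [if_pos hmi]
      refine mem_IccP.2 ⟨h1, ?_⟩
      have := (PNat.coe_lt_coe m i).2 hmi
      have hb' : (b:ℕ) ≤ i := by exact_mod_cast hb
      rw [coe_sub_one ha]
      have hia' : (i:ℕ) ≤ a := by exact_mod_cast hia
      omega
    · rw [if_neg hmi]
      have hmi' : (i:ℕ) < m := by
        have : ¬ ((m:ℕ) < i) := fun hc => hmi (by exact_mod_cast hc)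
        omega
      have h1m : (1:ℕ) < m := by
        have : (1:ℕ) ≤ i := i.2
        omega
      refine mem_IccP.2 ⟨?_, ?_⟩
      · rw [coe_sub_one h1m]
        have hb' : (b:ℕ) ≤ i := by exact_mod_cast hb
        omega
      · rw [coe_sub_one h1m, coe_sub_one ha]
        omega
  · intro m hm
    simp only [mem_IccP] at hm
    obtain ⟨h1, h2⟩ := hm
    rw [coe_sub_one ha] at h2
    by_cases hmi : m < i
    · rw [if_pos hmi]
      refine Finset.mem_erase.2 ⟨ne_of_lt hmi, mem_IccP.2 ⟨h1, by omega⟩⟩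
    · rw [if_neg hmi]
      have hmi' : (i:ℕ) ≤ m := by
        have : ¬ ((m:ℕ) < i) := fun hc => hmi (by exact_mod_cast hc)
        omega
      refine Finset.mem_erase.2 ⟨?_, mem_IccP.2 ⟨?_, ?_⟩⟩
      · intro hc
        have : ((m+1:ℕ+):ℕ) = i := by exact_mod_cast hc
        rw [PNat.add_coe, PNat.one_coe] at this
        omega
      · rw [PNat.add_coe, PNat.one_coe]
        have hb' : (b:ℕ) ≤ i := by exact_mod_cast hb
        omega
      · rw [PNat.add_coe, PNat.one_coe]
        omega
  · intro m hm
    simp only [Finset.mem_erase, mem_IccP] at hm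
    obtain ⟨hne, h1, h2⟩ := hm
    have hne' : (m:ℕ) ≠ (i:ℕ) := fun hc => hne (PNat.coe_injective hc)
    by_cases hmi : m < i
    · rw [if_pos hmi, if_pos hmi]
    · rw [if_neg hmi]
      have hmi' : (i:ℕ) < m := by
        have : ¬ ((m:ℕ) < i) := fun hc => hmi (by exact_mod_cast hc)
        omega
      have h1m : (1:ℕ) < m := by
        have : (1:ℕ) ≤ i := i.2
        omega
      rw [if_neg, psub_add_one h1m]
      intro hc
      have := (PNat.coe_lt_coe _ _).2 hc
      rw [coe_sub_one h1m] at this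
      omega
  · intro m hm
    by_cases hmi : m < i
    · rw [if_pos hmi, if_pos hmi]
    · rw [if_neg hmi, if_neg (by
        intro hc
        have := (PNat.coe_lt_coe _ _).2 hc
        rw [PNat.add_coe, PNat.one_coe] at this
        have hmi' : (i:ℕ) ≤ m := by
          have : ¬ ((m:ℕ) < i) := fun hc2 => hmi (by exact_mod_cast hc2)
          omega
        omega), padd_sub_one]
  · intro m hm
    simp only [Finset.mem_erase, mem_IccP] at hm
    obtain ⟨hne, h1, h2⟩ := hm
    have hne' : (m:ℕ) ≠ (i:ℕ) := fun hc => hne (PNat.coe_injective hc)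
    by_cases hmi : m < i
    · rw [if_pos hmi]
      exact hlt m (by exact_mod_cast h1) hmi
    · rw [if_neg hmi]
      have hmi' : (i:ℕ) < m := by
        have : ¬ ((m:ℕ) < i) := fun hc => hmi (by exact_mod_cast hc)
        omega
      exact hgt m (by exact_mod_cast hmi') (by exact_mod_cast h2)

lemma sum_shiftall {b a : ℕ+} (hb : (1:ℕ) < b) (ha : (1:ℕ) < a)
    (f g : ℕ+ → M)
    (hgt : ∀ m, b ≤ m → m ≤ a → f m = g (m - 1)) :
    ∑ m ∈ Finset.Icc b a, f m = ∑ m ∈ Finset.Icc (b - 1) (a - 1), g m := by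
  apply Finset.sum_nbij' (i := fun m => m - 1) (j := fun m => m + 1)
  · intro m hm
    simp only [mem_IccP] at hm ⊢
    obtain ⟨h1, h2⟩ := hm
    have h1m : (1:ℕ) < m := by omega
    rw [coe_sub_one h1m, coe_sub_one hb, coe_sub_one ha]
    omega
  · intro m hm
    simp only [mem_IccP] at hm ⊢
    obtain ⟨h1, h2⟩ := hm
    rw [coe_sub_one hb] at h1
    rw [coe_sub_one ha] at h2
    rw [PNat.add_coe, PNat.one_coe]
    omega
  · intro m hm
    simp only [mem_IccP] at hm
    have h1m : (1:ℕ) < m := by omega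
    exact psub_add_one h1m
  · intro m hm
    exact padd_sub_one m
  · intro m hm
    simp only [mem_IccP] at hm
    exact hgt m (by exact_mod_cast hm.1) (by exact_mod_cast hm.2)

end sums
-- empty-interval lemmas
lemma IccP_empty {b a : ℕ+} (h : (a:ℕ) < b) : Finset.Icc b a = ∅ :=
  Finset.Icc_eq_empty (fun hc => absurd ((PNat.coe_le_coe _ _).2 hc) (by omega))

lemma IcoP_empty {b m : ℕ+} (h : (m:ℕ) ≤ b) : Finset.Ico b m = ∅ :=
  Finset.Ico_eq_empty (fun hc => absurd ((PNat.coe_lt_coe _ _).2 hc) (by omega))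

section prods
variable {M : Type*} [CommMonoid M]

lemma prod_dropi_Ico {b m k : ℕ+} (hb : b ≤ k) (hk : k < m)
    (f g : ℕ+ → M)
    (hlt : ∀ j, b ≤ j → j < k → f j = g j)
    (hgt : ∀ j, k < j → j < m → f j = g (j - 1))
    (hi : f k = 1) :
    ∏ j ∈ Finset.Ico b m, f j = ∏ j ∈ Finset.Ico b (m - 1), g j := by
  have h1m : (1:ℕ) < m := by
    have := (PNat.coe_lt_coe _ _).2 hk
    have := k.pos
    omega
  have hksrc : k ∈ Finset.Ico b m :=
    mem_IcoP.2 ⟨by exact_mod_cast hb, by exact_mod_cast hk⟩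
  rw [← Finset.prod_erase_mul _ _ hksrc, hi, mul_one]
  apply Finset.prod_nbij' (i := fun j => if j < k then j else j - 1)
    (j := fun j => if j < k then j else j + 1)
  · intro j hj
    simp only [Finset.mem_erase, mem_IcoP] at hj
    obtain ⟨hne, h1, h2⟩ := hj
    have hne' : (j:ℕ) ≠ (k:ℕ) := fun hc => hne (PNat.coe_injective hc)
    have hbk : (b:ℕ) ≤ k := by exact_mod_cast hb
    by_cases hjk : j < k
    · rw [if_pos hjk]
      have := (PNat.coe_lt_coe j k).2 hjk
      refine mem_IcoP.2 ⟨h1, ?_⟩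
      rw [coe_sub_one h1m]
      have := (PNat.coe_lt_coe k m).2 hk
      omega
    · rw [if_neg hjk]
      have hjk' : (k:ℕ) < j := by
        have : ¬ ((j:ℕ) < k) := fun hc => hjk (by exact_mod_cast hc)
        omega
      have h1j : (1:ℕ) < j := by have := k.pos; omega
      refine mem_IcoP.2 ⟨?_, ?_⟩
      · rw [coe_sub_one h1j]; omega
      · rw [coe_sub_one h1j, coe_sub_one h1m]; omega
  · intro j hj
    simp only [mem_IcoP] at hj
    obtain ⟨h1, h2⟩ := hj
    rw [coe_sub_one h1m] at h2
    by_cases hjk : j < k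
    · rw [if_pos hjk]
      exact Finset.mem_erase.2 ⟨ne_of_lt hjk, mem_IcoP.2 ⟨h1, by omega⟩⟩
    · rw [if_neg hjk]
      have hjk' : (k:ℕ) ≤ j := by
        have : ¬ ((j:ℕ) < k) := fun hc => hjk (by exact_mod_cast hc)
        omega
      refine Finset.mem_erase.2 ⟨?_, mem_IcoP.2 ⟨?_, ?_⟩⟩
      · intro hc
        have : ((j+1:ℕ+):ℕ) = k := by exact_mod_cast hc
        rw [PNat.add_coe, PNat.one_coe] at this
        omega
      · rw [PNat.add_coe, PNat.one_coe]
        have : (b:ℕ) ≤ k := by exact_mod_cast hb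
        omega
      · rw [PNat.add_coe, PNat.one_coe]
        omega
  · intro j hj
    simp only [Finset.mem_erase, mem_IcoP] at hj
    obtain ⟨hne, h1, h2⟩ := hj
    have hne' : (j:ℕ) ≠ (k:ℕ) := fun hc => hne (PNat.coe_injective hc)
    by_cases hjk : j < k
    · rw [if_pos hjk, if_pos hjk]
    · rw [if_neg hjk]
      have hjk' : (k:ℕ) < j := by
        have : ¬ ((j:ℕ) < k) := fun hc => hjk (by exact_mod_cast hc)
        omega
      have h1j : (1:ℕ) < j := by have := k.pos; omega
      rw [if_neg, psub_add_one h1j]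
      intro hc
      have := (PNat.coe_lt_coe _ _).2 hc
      rw [coe_sub_one h1j] at this
      omega
  · intro j hj
    by_cases hjk : j < k
    · rw [if_pos hjk, if_pos hjk]
    · rw [if_neg hjk, if_neg (by
        intro hc
        have := (PNat.coe_lt_coe _ _).2 hc
        rw [PNat.add_coe, PNat.one_coe] at this
        have : ¬ ((j:ℕ) < k) := fun hc2 => hjk (by exact_mod_cast hc2)
        omega), padd_sub_one]
  · intro j hj
    simp only [Finset.mem_erase, mem_IcoP] at hj
    obtain ⟨hne, h1, h2⟩ := hj
    have hne' : (j:ℕ) ≠ (k:ℕ) := fun hc => hne (PNat.coe_injective hc)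
    by_cases hjk : j < k
    · rw [if_pos hjk]
      exact hlt j (by exact_mod_cast h1) hjk
    · rw [if_neg hjk]
      have hjk' : (k:ℕ) < j := by
        have : ¬ ((j:ℕ) < k) := fun hc => hjk (by exact_mod_cast hc)
        omega
      exact hgt j (by exact_mod_cast hjk') (by exact_mod_cast h2)

lemma prod_shiftall_Ico {b m : ℕ+} (hb : (1:ℕ) < b)
    (f g : ℕ+ → M)
    (hgt : ∀ j, b ≤ j → j < m → f j = g (j - 1)) :
    ∏ j ∈ Finset.Ico b m, f j = ∏ j ∈ Finset.Ico (b - 1) (m - 1), g j := by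
  by_cases hbm : (m:ℕ) ≤ b
  · have he : ((m - 1 : ℕ+):ℕ) ≤ ((b - 1 : ℕ+):ℕ) := by
      by_cases h1 : (1:ℕ) < m
      · rw [coe_sub_one h1, coe_sub_one hb]; omega
      · have hm1 : (m:ℕ) = 1 := by have := m.pos; omega
        have : m = 1 := PNat.coe_injective hm1
        subst this
        simp
        exact (b-1).pos
    rw [IcoP_empty hbm, IcoP_empty he]
    simp
  · have h1m : (1:ℕ) < m := by omega
    apply Finset.prod_nbij' (i := fun j => j - 1) (j := fun j => j + 1)
    · intro j hj
      simp only [mem_IcoP] at hj ⊢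
      obtain ⟨h1, h2⟩ := hj
      have h1j : (1:ℕ) < j := by omega
      rw [coe_sub_one h1j, coe_sub_one hb, coe_sub_one h1m]
      omega
    · intro j hj
      simp only [mem_IcoP] at hj ⊢
      obtain ⟨h1, h2⟩ := hj
      rw [coe_sub_one hb] at h1
      rw [coe_sub_one h1m] at h2
      rw [PNat.add_coe, PNat.one_coe]
      omega
    · intro j hj
      simp only [mem_IcoP] at hj
      have h1j : (1:ℕ) < j := by omega
      exact psub_add_one h1j
    · intro j _
      exact padd_sub_one j
    · intro j hj
      simp only [mem_IcoP] at hj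
      exact hgt j (by exact_mod_cast hj.1) (by exact_mod_cast hj.2)

end prods
open MvPolynomial in
noncomputable def Ef (β : ℤ) (b m : ℕ+) : MyR :=
  ∏ j ∈ Finset.Ico b m, (1 + C β * X j)

open MvPolynomial in
noncomputable def hp (β : ℤ) : BTree → ℕ+ → ℕ+ → MyR
  | .leaf, a, b => if b ≤ a then 1 else 0
  | .node l r, a, b =>
      ∑ m ∈ Finset.Icc b a,
        X m * Ef β b m * hp β l a m * hp β r (a + l.numLeaves) (m + 1)

lemma hp_leaf (β : ℤ) (a b : ℕ+) : hp β BTree.leaf a b = if b ≤ a then 1 else 0 := rfl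

open MvPolynomial in
lemma hp_node (β : ℤ) (l r : BTree) (a b : ℕ+) :
    hp β (BTree.node l r) a b =
      ∑ m ∈ Finset.Icc b a,
        X m * Ef β b m * hp β l a m * hp β r (a + l.numLeaves) (m + 1) := rfl

open MvPolynomial

lemma BS_Ef_high {β : ℤ} {b m k : ℕ+} (h : m ≤ k) : BS k (Ef β b m) = Ef β b m := by
  rw [Ef, map_prod]
  apply Finset.prod_congr rfl
  intro j hj
  rw [BS_one_add, BS_X_lt]
  have := mem_IcoP.1 hj
  have hmk := (PNat.coe_le_coe _ _).2 h
  exact (PNat.coe_lt_coe _ _).1 (by omega)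

lemma BS_Ef_mid {β : ℤ} {b m k : ℕ+} (hb : b ≤ k) (hk : k < m) :
    BS k (Ef β b m) = Ef β b (m - 1) := by
  rw [Ef, map_prod, Ef]
  apply prod_dropi_Ico hb hk
  · intro j _ hj
    rw [BS_one_add, BS_X_lt hj]
  · intro j hj _
    rw [BS_one_add, BS_X_gt hj]
  · rw [BS_one_add, BS_X_self, mul_zero, add_zero]

lemma BS_Ef_low {β : ℤ} {b m k : ℕ+} (hk : k < b) :
    BS k (Ef β b m) = Ef β (b - 1) (m - 1) := by
  have hb : (1:ℕ) < b := by
    have := (PNat.coe_lt_coe _ _).2 hk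
    have := k.pos
    omega
  rw [Ef, map_prod, Ef]
  apply prod_shiftall_Ico hb
  intro j hj _
  rw [BS_one_add, BS_X_gt (lt_of_lt_of_le hk hj)]

lemma Ef_one_right {β : ℤ} {b m : ℕ+} (h : (m:ℕ) ≤ b) : Ef β b m = 1 := by
  rw [Ef, IcoP_empty h, Finset.prod_empty]

lemma telescope (β : ℤ) (e : ℕ+) : ∀ b : ℕ+,
    ∑ m ∈ Finset.Icc b e, (C β * X m) * Ef β b m = Ef β b (e + 1) - 1 := by
  induction e using PNat.recOn with
  | one =>
    intro b
    by_cases hb : b = 1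
    · subst hb
      have h11 : Finset.Icc (1:ℕ+) 1 = {1} := by
        ext m
        simp only [mem_IccP, Finset.mem_singleton]
        constructor
        · intro hm
          exact PNat.coe_injective (by have := m.pos; omega)
        · rintro rfl; simp
      rw [h11, Finset.sum_singleton]
      have h12 : Finset.Ico (1:ℕ+) (1+1) = {1} := by
        ext m
        simp only [mem_IcoP, Finset.mem_singleton, PNat.add_coe, PNat.one_coe]
        constructor
        · intro hm
          exact PNat.coe_injective (by have := m.pos; simp only [PNat.one_coe]; omega)
        · rintro rfl; simp
      rw [Ef_one_right (by simp), mul_one, Ef, h12, Finset.prod_singleton]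
      ring
    · have hb1 : (1:ℕ) < b := by
        have := b.pos
        have : (b:ℕ) ≠ 1 := fun hc => hb (PNat.coe_injective hc)
        omega
      rw [IccP_empty (by simpa using hb1), Finset.sum_empty,
        Ef_one_right (by rw [PNat.add_coe, PNat.one_coe]; omega)]
      ring
  | succ e IH =>
    intro b
    by_cases hb : b ≤ e + 1
    · have hne : e + 1 ∉ Finset.Icc b e := by
        intro hc
        have := (mem_IccP.1 hc).2
        rw [PNat.add_coe, PNat.one_coe] at this
        omega
      rw [Icc_insert_top hb, Finset.sum_insert hne, IH b]
      have hne2 : e + 1 ∉ Finset.Ico b (e + 1) := by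
        intro hc
        exact absurd (mem_IcoP.1 hc).2 (by omega)
      have hEf : Ef β b (e + 1 + 1) = (1 + C β * X (e+1)) * Ef β b (e + 1) := by
        rw [Ef, Ico_insert_top hb, Finset.prod_insert hne2, Ef]
      rw [hEf]
      ring
    · have hb' : ((e:ℕ) + 1) < b := by
        have : ¬ ((b:ℕ) ≤ ((e+1:ℕ+):ℕ)) := fun hc => hb ((PNat.coe_le_coe _ _).1 hc)
        rw [PNat.add_coe, PNat.one_coe] at this
        omega
      rw [IccP_empty (by rw [PNat.add_coe, PNat.one_coe]; omega), Finset.sum_empty,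
        Ef_one_right (by simp only [PNat.add_coe, PNat.one_coe]; omega)]
      ring

-- qdes and trim lemmas
namespace BTree

lemma qdesSet_leaf (a : ℕ+) : qdesSet leaf a = ∅ := rfl

lemma mem_qdesSet_node {l r : BTree} {a i : ℕ+} :
    i ∈ (node l r).qdesSet a ↔
      (l = leaf ∧ r = leaf ∧ i = a) ∨ i ∈ l.qdesSet a ∨ i ∈ r.qdesSet (a + l.numLeaves) := by
  match l, r with
  | leaf, leaf => simp [qdesSet]
  | leaf, node x y => simp [qdesSet]
  | node x y, leaf => simp [qdesSet]
  | node x y, node u v => simp [qdesSet]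

lemma qdes_bounds : ∀ (t : BTree) (a i : ℕ+), i ∈ t.qdesSet a →
    (a:ℕ) ≤ i ∧ (i:ℕ) + 2 ≤ (a:ℕ) + t.numLeaves := by
  intro t
  induction t with
  | leaf => intro a i hi; exact absurd hi (by simp [qdesSet_leaf])
  | node l r IHl IHr =>
    intro a i hi
    rcases mem_qdesSet_node.1 hi with ⟨hl, hr, rfl⟩ | hi | hi
    · subst hl; subst hr
      simp [numLeaves, PNat.add_coe]
    · obtain ⟨h1, h2⟩ := IHl a i hi
      have : (0:ℕ) < r.numLeaves := r.numLeaves.pos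
      constructor
      · exact h1
      · rw [numLeaves, PNat.add_coe]
        omega
    · obtain ⟨h1, h2⟩ := IHr (a + l.numLeaves) i hi
      rw [PNat.add_coe] at h1 h2
      have : (0:ℕ) < l.numLeaves := l.numLeaves.pos
      constructor
      · omega
      · rw [numLeaves, PNat.add_coe]
        omega

lemma trim_eq_of_not_mem : ∀ (t : BTree) (a i : ℕ+), i ∉ t.qdesSet a → t.trim a i = t := by
  intro t
  induction t with
  | leaf => intro a i _; rfl
  | node l r IHl IHr =>
    intro a i hi
    rw [trim, if_neg, IHl a i, IHr (a + l.numLeaves) i]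
    · intro hc
      exact hi (mem_qdesSet_node.2 (Or.inr (Or.inr hc)))
    · intro hc
      exact hi (mem_qdesSet_node.2 (Or.inr (Or.inl hc)))
    · rintro ⟨h1, h2, h3⟩
      exact hi (mem_qdesSet_node.2 (Or.inl ⟨h1, h2, h3.symm⟩))

lemma numLeaves_trim : ∀ (t : BTree) (a i : ℕ+), i ∈ t.qdesSet a →
    (t.trim a i).numLeaves + 1 = t.numLeaves := by
  intro t
  induction t with
  | leaf => intro a i hi; exact absurd hi (by simp [qdesSet_leaf])
  | node l r IHl IHr =>
    intro a i hi
    rcases mem_qdesSet_node.1 hi with ⟨hl, hr, rfl⟩ | hi' | hi'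
    · subst hl; subst hr
      rw [trim, if_pos ⟨rfl, rfl, rfl⟩]
      rfl
    · have hlq : l ≠ leaf := by
        rintro rfl
        exact absurd hi' (by simp [qdesSet_leaf])
      rw [trim, if_neg (by rintro ⟨h1, _, _⟩; exact hlq h1),
        trim_eq_of_not_mem r _ i (by
          intro hc
          obtain ⟨hc1, _⟩ := qdes_bounds r _ i hc
          obtain ⟨_, hc2⟩ := qdes_bounds l a i hi'
          rw [PNat.add_coe] at hc1
          omega)]
      rw [numLeaves, numLeaves]
      rw [← IHl a i hi']
      ring
    · have hrq : r ≠ leaf := by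
        rintro rfl
        exact absurd hi' (by simp [qdesSet_leaf])
      rw [trim, if_neg (by rintro ⟨_, h2, _⟩; exact hrq h2),
        trim_eq_of_not_mem l a i (by
          intro hc
          obtain ⟨_, hc2⟩ := qdes_bounds l a i hc
          obtain ⟨hc1, _⟩ := qdes_bounds r _ i hi'
          rw [PNat.add_coe] at hc1
          omega)]
      rw [numLeaves, numLeaves]
      rw [← IHr _ i hi']
      ring

end BTree
open MvPolynomial

lemma BS_term {β : ℤ} (k m b : ℕ+) (f g : MyR) :
    BS k (X m * Ef β b m * f * g) =
      BS k (X m) * BS k (Ef β b m) * BS k f * BS k g := by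
  simp [map_mul]

lemma psub_add_comm {a : ℕ+} (c : ℕ+) (h : (1:ℕ) < a) : (a - 1) + c = (a + c) - 1 := by
  apply PNat.coe_injective
  have hc := c.pos
  rw [PNat.add_coe, coe_sub_one h, coe_sub_one (by rw [PNat.add_coe]; omega), PNat.add_coe]
  omega

lemma numLeaves_node_coe (l r : BTree) :
    ((BTree.node l r).numLeaves : ℕ) = (l.numLeaves : ℕ) + (r.numLeaves : ℕ) := by
  rw [BTree.numLeaves, PNat.add_coe]

/-- L3': `BS k` fixes `hp t a b` when the tree lies entirely to the left of `k`. -/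
lemma BS_hp_high (β : ℤ) : ∀ (t : BTree) (a b k : ℕ+),
    (a:ℕ) + t.numLeaves ≤ (k:ℕ) + 1 → BS k (hp β t a b) = hp β t a b := by
  intro t
  induction t with
  | leaf => intro a b k _; by_cases h : b ≤ a <;> simp [hp_leaf, h]
  | node l r IHl IHr =>
    intro a b k hk
    rw [numLeaves_node_coe] at hk
    have hlp := l.numLeaves.pos
    have hrp := r.numLeaves.pos
    rw [hp_node, map_sum]
    apply Finset.sum_congr rfl
    intro m hm
    obtain ⟨hm1, hm2⟩ := mem_IccP.1 hm
    rw [BS_term, BS_X_lt (by exact_mod_cast (show (m:ℕ) < k by omega)),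
      BS_Ef_high (by exact_mod_cast (show (m:ℕ) ≤ k by omega)),
      IHl a m k (by omega), IHr (a + l.numLeaves) (m+1) k (by rw [PNat.add_coe]; omega)]

/-- L2': shifting under `BS k` when `k < a` (tree entirely to the right of `k`). -/
lemma BS_hp_lt (β : ℤ) : ∀ (t : BTree) (a b k : ℕ+), k < a →
    BS k (hp β t a b) = hp β t (a - 1) (if k < b then b - 1 else b) := by
  intro t
  induction t with
  | leaf =>
    intro a b k hka
    have hka' := (PNat.coe_lt_coe _ _).2 hka
    have hk1 := k.pos
    have ha1 : (1:ℕ) < a := by omega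
    by_cases hkb : k < b
    · have hkb' := (PNat.coe_lt_coe _ _).2 hkb
      have hb1 : (1:ℕ) < b := by omega
      rw [if_pos hkb]
      by_cases h : b ≤ a
      · have h' := (PNat.coe_le_coe _ _).2 h
        rw [hp_leaf, hp_leaf, if_pos h, if_pos (by
          rw [← PNat.coe_le_coe, coe_sub_one hb1, coe_sub_one ha1]; omega)]
        simp
      · have h' : ¬ ((b:ℕ) ≤ a) := fun hc => h ((PNat.coe_le_coe _ _).1 hc)
        rw [hp_leaf, hp_leaf, if_neg h, if_neg (by
          rw [← PNat.coe_le_coe, coe_sub_one hb1, coe_sub_one ha1]; omega)]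
        simp
    · have hkb' : (b:ℕ) ≤ k := by
        have : ¬ ((k:ℕ) < b) := fun hc => hkb (by exact_mod_cast hc)
        omega
      rw [if_neg hkb, hp_leaf, hp_leaf, if_pos (by exact_mod_cast (show (b:ℕ) ≤ a by omega)),
        if_pos (by rw [← PNat.coe_le_coe, coe_sub_one ha1]; omega)]
      simp
  | node l r IHl IHr =>
    intro a b k hka
    have hka' := (PNat.coe_lt_coe _ _).2 hka
    have hk1 := k.pos
    have ha1 : (1:ℕ) < a := by omega
    have hlp := l.numLeaves.pos
    have hcc : (a - 1) + l.numLeaves = (a + l.numLeaves) - 1 := psub_add_comm _ ha1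
    rw [hp_node, map_sum]
    by_cases hkb : k < b
    · have hkb' := (PNat.coe_lt_coe _ _).2 hkb
      have hb1 : (1:ℕ) < b := by omega
      rw [if_pos hkb, hp_node, hcc]
      apply sum_shiftall hb1 ha1
      intro m hm1 hm2
      have hm1' := (PNat.coe_le_coe _ _).2 hm1
      have h1m : (1:ℕ) < m := by omega
      have hkm : k < m := by rw [← PNat.coe_lt_coe]; omega
      rw [BS_term, BS_X_gt hkm, BS_Ef_low hkb,
        IHl a m k hka, if_pos hkm,
        IHr (a + l.numLeaves) (m+1) k (by rw [← PNat.coe_lt_coe, PNat.add_coe]; omega),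
        if_pos (lt_of_lt_of_le hkm (by rw [← PNat.coe_le_coe, PNat.add_coe, PNat.one_coe]; omega)),
        padd_sub_one, psub_add_one h1m]
    · have hkb' : (b:ℕ) ≤ k := by
        have : ¬ ((k:ℕ) < b) := fun hc => hkb (by exact_mod_cast hc)
        omega
      rw [if_neg hkb, hp_node]
      apply sum_dropi (by exact_mod_cast hkb') (le_of_lt hka) ha1
      · intro m hm1 hm2
        have hm2' := (PNat.coe_lt_coe _ _).2 hm2
        rw [BS_term, BS_X_lt hm2, BS_Ef_high (le_of_lt hm2),
          IHl a m k hka, if_neg (not_lt_of_gt hm2),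
          IHr (a + l.numLeaves) (m+1) k (by rw [← PNat.coe_lt_coe, PNat.add_coe]; omega),
          if_neg (by rw [not_lt, ← PNat.coe_le_coe, PNat.add_coe, PNat.one_coe]; omega), hcc]
      · intro m hm1 hm2
        have hm1' := (PNat.coe_lt_coe _ _).2 hm1
        have h1m : (1:ℕ) < m := by omega
        rw [BS_term, BS_X_gt hm1, BS_Ef_mid (by exact_mod_cast hkb') hm1,
          IHl a m k hka, if_pos hm1,
          IHr (a + l.numLeaves) (m+1) k (by rw [← PNat.coe_lt_coe, PNat.add_coe]; omega),
          if_pos (lt_of_lt_of_le hm1 (by rw [← PNat.coe_le_coe, PNat.add_coe, PNat.one_coe]; omega)),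
          padd_sub_one, hcc, psub_add_one h1m]
      · rw [BS_term, BS_X_self, zero_mul, zero_mul, zero_mul]

/-- L2b: shifting under `BS a` when the tree starts exactly at `a`. -/
lemma BS_hp_eq (β : ℤ) : ∀ (t : BTree) (a b : ℕ+), b < a →
    BS a (hp β t a b) = hp β t (a - 1) b := by
  intro t
  induction t with
  | leaf =>
    intro a b hba
    have hba' := (PNat.coe_lt_coe _ _).2 hba
    have hb1 := b.pos
    have ha1 : (1:ℕ) < a := by omega
    rw [hp_leaf, hp_leaf, if_pos (le_of_lt hba),
      if_pos (by rw [← PNat.coe_le_coe, coe_sub_one ha1]; omega)]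
    simp
  | node l r IHl IHr =>
    intro a b hba
    have hba' := (PNat.coe_lt_coe _ _).2 hba
    have hb1 := b.pos
    have ha1 : (1:ℕ) < a := by omega
    have hlp := l.numLeaves.pos
    have hcc : (a - 1) + l.numLeaves = (a + l.numLeaves) - 1 := psub_add_comm _ ha1
    rw [hp_node, map_sum, hp_node]
    apply sum_dropi (le_of_lt hba) (le_refl a) ha1
    · intro m hm1 hm2
      have hm2' := (PNat.coe_lt_coe _ _).2 hm2
      rw [BS_term, BS_X_lt hm2, BS_Ef_high (le_of_lt hm2),
        IHl a m hm2,
        BS_hp_lt β r (a + l.numLeaves) (m+1) a (by rw [← PNat.coe_lt_coe, PNat.add_coe]; omega),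
        if_neg (by rw [not_lt, ← PNat.coe_le_coe, PNat.add_coe, PNat.one_coe]; omega), hcc]
    · intro m hm1 hm2
      exact absurd ((PNat.coe_lt_coe _ _).2 hm1)
        (by have := (PNat.coe_le_coe _ _).2 hm2; omega)
    · rw [BS_term, BS_X_self, zero_mul, zero_mul, zero_mul]
lemma pn_lt_succ (i : ℕ+) : i < i + 1 := by
  rw [← PNat.coe_lt_coe, PNat.add_coe, PNat.one_coe]; omega

lemma pn_ne_succ (i : ℕ+) : i ≠ i + 1 := ne_of_lt (pn_lt_succ i)

lemma numLeaves_leaf : BTree.leaf.numLeaves = 1 := rfl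

/-- L6b: killing lemma at the left boundary. -/
lemma BS_hp_zero (β : ℤ) : ∀ (t : BTree) (i : ℕ+), t ≠ BTree.leaf → i ∉ t.qdesSet i →
    BS (i+1) (hp β t i i) = 0 := by
  intro t
  induction t with
  | leaf => intro i h _; exact absurd rfl h
  | node l r IHl IHr =>
    intro i _ hq
    rw [hp_node, Finset.Icc_self, Finset.sum_singleton, BS_term]
    by_cases hl : l = BTree.leaf
    · subst hl
      have hr : r ≠ BTree.leaf := by
        rintro rfl
        exact hq (BTree.mem_qdesSet_node.2 (Or.inl ⟨rfl, rfl, rfl⟩))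
      cases r with
      | leaf => exact absurd rfl hr
      | node r1 r2 =>
        rw [numLeaves_leaf, hp_node, Finset.Icc_self, Finset.sum_singleton, BS_term,
          BS_X_self, zero_mul, zero_mul, zero_mul, mul_zero]
    · rw [IHl i hl (fun hc => hq (BTree.mem_qdesSet_node.2 (Or.inr (Or.inl hc)))),
        mul_zero, zero_mul]

/-- L1': the two Bergeron–Sottile operators agree away from `QDes`. -/
lemma BS_hp_swap (β : ℤ) : ∀ (t : BTree) (a b i : ℕ+), b ≤ i → i ∉ t.qdesSet a →
    BS (i+1) (hp β t a b) = BS i (hp β t a b) := by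
  intro t
  induction t with
  | leaf => intro a b i _ _; by_cases h : b ≤ a <;> simp [hp_leaf, h]
  | node l r IHl IHr =>
    intro a b i hbi hq
    have hql : i ∉ l.qdesSet a := fun hc => hq (BTree.mem_qdesSet_node.2 (Or.inr (Or.inl hc)))
    have hqr : i ∉ r.qdesSet (a + l.numLeaves) :=
      fun hc => hq (BTree.mem_qdesSet_node.2 (Or.inr (Or.inr hc)))
    have hnq : ¬(l = BTree.leaf ∧ r = BTree.leaf ∧ i = a) :=
      fun hc => hq (BTree.mem_qdesSet_node.2 (Or.inl hc))
    have hbi' := (PNat.coe_le_coe _ _).2 hbi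
    have hlp := l.numLeaves.pos
    have hip := i.pos
    rw [hp_node, map_sum, map_sum]
    rcases lt_trichotomy (a:ℕ) (i:ℕ) with hai | hai | hai
    · -- tree entirely to the left of i
      apply Finset.sum_congr rfl
      intro m hm
      obtain ⟨hm1, hm2⟩ := mem_IccP.1 hm
      have hmi : m < i := by rw [← PNat.coe_lt_coe]; omega
      have hmi1 : m < i + 1 := by rw [← PNat.coe_lt_coe, PNat.add_coe, PNat.one_coe]; omega
      rw [BS_term, BS_term, BS_X_lt hmi, BS_X_lt hmi1,
        BS_Ef_high (le_of_lt hmi), BS_Ef_high (le_of_lt hmi1),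
        IHl a m i (by rw [← PNat.coe_le_coe]; omega) hql,
        IHr (a + l.numLeaves) (m+1) i
          (by rw [← PNat.coe_le_coe, PNat.add_coe, PNat.one_coe]; omega) hqr]
    · -- a = i
      have haeq : a = i := PNat.coe_injective hai
      subst haeq
      have hia : a ∈ Finset.Icc b a := mem_IccP.2 ⟨hbi', le_refl _⟩
      rw [← Finset.sum_erase_add _ _ hia, ← Finset.sum_erase_add _ _ hia]
      congr 1
      · apply Finset.sum_congr rfl
        intro m hm
        obtain ⟨hne, hm'⟩ := Finset.mem_erase.1 hm
        obtain ⟨hm1, hm2⟩ := mem_IccP.1 hm'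
        have hne' : (m:ℕ) ≠ (a:ℕ) := fun hc => hne (PNat.coe_injective hc)
        have hmi : m < a := by rw [← PNat.coe_lt_coe]; omega
        have hmi1 : m < a + 1 := by rw [← PNat.coe_lt_coe, PNat.add_coe, PNat.one_coe]; omega
        rw [BS_term, BS_term, BS_X_lt hmi, BS_X_lt hmi1,
          BS_Ef_high (le_of_lt hmi), BS_Ef_high (le_of_lt hmi1),
          IHl a m a (by rw [← PNat.coe_le_coe]; omega) hql,
          IHr (a + l.numLeaves) (m+1) a
            (by rw [← PNat.coe_le_coe, PNat.add_coe, PNat.one_coe]; omega) hqr]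
      · rw [BS_term, BS_term, BS_X_self, zero_mul, zero_mul, zero_mul]
        by_cases hl : l = BTree.leaf
        · subst hl
          have hr : r ≠ BTree.leaf := by
            rintro rfl
            exact hnq ⟨rfl, rfl, rfl⟩
          cases r with
          | leaf => exact absurd rfl hr
          | node r1 r2 =>
            rw [numLeaves_leaf, hp_node, Finset.Icc_self, Finset.sum_singleton, BS_term,
              BS_X_self, zero_mul, zero_mul, zero_mul, mul_zero]
        · rw [BS_hp_zero β l a hl hql, mul_zero, zero_mul]
    · -- i < a
      have hia : i < a := by rw [← PNat.coe_lt_coe]; omega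
      have hi1a : ((i+1:ℕ+):ℕ) ≤ (a:ℕ) := by rw [PNat.add_coe, PNat.one_coe]; omega
      have h1 : i + 1 ∈ Finset.Icc b a := mem_IccP.2
        ⟨by rw [PNat.add_coe, PNat.one_coe]; omega, hi1a⟩
      have h2 : i ∈ (Finset.Icc b a).erase (i+1) :=
        Finset.mem_erase.2 ⟨pn_ne_succ i, mem_IccP.2 ⟨hbi', by omega⟩⟩
      have hic : (i:ℕ) < ((a + l.numLeaves : ℕ+):ℕ) := by rw [PNat.add_coe]; omega
      have hi1c : ((i+1:ℕ+):ℕ) < ((a + l.numLeaves : ℕ+):ℕ) := by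
        rw [PNat.add_coe, PNat.add_coe, PNat.one_coe]; omega
      rw [← Finset.sum_erase_add _ _ h1, ← Finset.sum_erase_add _ _ h1,
        ← Finset.sum_erase_add _ _ h2, ← Finset.sum_erase_add _ _ h2]
      have hmain : ∀ m ∈ ((Finset.Icc b a).erase (i+1)).erase i,
          BS (i+1) (X m * Ef β b m * hp β l a m * hp β r (a + l.numLeaves) (m+1)) =
          BS i (X m * Ef β b m * hp β l a m * hp β r (a + l.numLeaves) (m+1)) := by
        intro m hm
        obtain ⟨hnei, hm'⟩ := Finset.mem_erase.1 hm
        obtain ⟨hnei1, hm''⟩ := Finset.mem_erase.1 hm'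
        obtain ⟨hm1, hm2⟩ := mem_IccP.1 hm''
        have hnei' : (m:ℕ) ≠ (i:ℕ) := fun hc => hnei (PNat.coe_injective hc)
        have hnei1' : (m:ℕ) ≠ (i:ℕ)+1 := by
          intro hc
          exact hnei1 (PNat.coe_injective (by rw [PNat.add_coe, PNat.one_coe]; omega))
        rcases lt_or_gt_of_ne hnei' with hmlt | hmgt
        · have hmi : m < i := by rw [← PNat.coe_lt_coe]; omega
          have hmi1 : m < i + 1 := by rw [← PNat.coe_lt_coe, PNat.add_coe, PNat.one_coe]; omega
          rw [BS_term, BS_term, BS_X_lt hmi, BS_X_lt hmi1,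
            BS_Ef_high (le_of_lt hmi), BS_Ef_high (le_of_lt hmi1),
            IHl a m i (by rw [← PNat.coe_le_coe]; omega) hql,
            IHr (a + l.numLeaves) (m+1) i
              (by rw [← PNat.coe_le_coe, PNat.add_coe, PNat.one_coe]; omega) hqr]
        · -- i + 1 < m
          have hmgt' : (i:ℕ) + 1 < (m:ℕ) := by omega
          have hgim : i < m := by rw [← PNat.coe_lt_coe]; omega
          have hgi1m : i + 1 < m := by rw [← PNat.coe_lt_coe, PNat.add_coe, PNat.one_coe]; omega
          have hi1a' : i + 1 < a := by
            rw [← PNat.coe_lt_coe, PNat.add_coe, PNat.one_coe]; omega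
          have h1m : (1:ℕ) < m := by omega
          rw [BS_term, BS_term, BS_X_gt hgim, BS_X_gt hgi1m,
            BS_Ef_mid hbi hgim, BS_Ef_mid (by
              rw [← PNat.coe_le_coe, PNat.add_coe, PNat.one_coe]; omega) hgi1m,
            BS_hp_lt β l a m i hia, BS_hp_lt β l a m (i+1) hi1a',
            if_pos hgim, if_pos hgi1m,
            BS_hp_lt β r (a + l.numLeaves) (m+1) i (by rw [← PNat.coe_lt_coe]; exact hic),
            BS_hp_lt β r (a + l.numLeaves) (m+1) (i+1) (by rw [← PNat.coe_lt_coe]; exact hi1c),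
            if_pos (lt_trans hgim (pn_lt_succ m)),
            if_pos (show i + 1 < m + 1 from by
              rw [← PNat.coe_lt_coe, PNat.add_coe, PNat.add_coe, PNat.one_coe]; omega),
            padd_sub_one]
      rw [Finset.sum_congr rfl hmain]
      -- remaining: f(i) and f(i+1) cross terms
      have hLi1 : BS (i+1) (X (i+1) * Ef β b (i+1) * hp β l a (i+1) *
          hp β r (a + l.numLeaves) (i+1+1)) = 0 := by
        rw [BS_term, BS_X_self, zero_mul, zero_mul, zero_mul]
      have hRi : BS i (X i * Ef β b i * hp β l a i *
          hp β r (a + l.numLeaves) (i+1)) = 0 := by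
        rw [BS_term, BS_X_self, zero_mul, zero_mul, zero_mul]
      have hcross : BS (i+1) (X i * Ef β b i * hp β l a i *
            hp β r (a + l.numLeaves) (i+1)) =
          BS i (X (i+1) * Ef β b (i+1) * hp β l a (i+1) *
            hp β r (a + l.numLeaves) (i+1+1)) := by
        have hfl : BS (i+1) (hp β l a i) = hp β l (a-1) i := by
          by_cases hc : (i:ℕ) + 1 < (a:ℕ)
          · rw [BS_hp_lt β l a i (i+1)
              (by rw [← PNat.coe_lt_coe, PNat.add_coe, PNat.one_coe]; omega),
              if_neg (not_lt_of_gt (pn_lt_succ i))]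
          · have : a = i + 1 := PNat.coe_injective
              (by rw [PNat.add_coe, PNat.one_coe]; omega)
            subst this
            rw [BS_hp_eq β l (i+1) i (pn_lt_succ i)]
        have hfr : BS (i+1) (hp β r (a + l.numLeaves) (i+1)) =
            hp β r ((a + l.numLeaves) - 1) (i+1) := by
          rw [BS_hp_lt β r (a + l.numLeaves) (i+1) (i+1) (by rw [← PNat.coe_lt_coe]; exact hi1c),
            if_neg (lt_irrefl _)]
        rw [BS_term, BS_term, BS_X_lt (pn_lt_succ i), BS_X_gt (pn_lt_succ i),
          BS_Ef_high (le_of_lt (pn_lt_succ i)), BS_Ef_mid hbi (pn_lt_succ i),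
          hfl, hfr,
          BS_hp_lt β l a (i+1) i hia, if_pos (pn_lt_succ i),
          BS_hp_lt β r (a + l.numLeaves) (i+1+1) i (by rw [← PNat.coe_lt_coe]; exact hic),
          if_pos (lt_trans (pn_lt_succ i) (pn_lt_succ (i+1))),
          padd_sub_one, padd_sub_one]
      rw [hLi1, hRi, hcross]
      ring
lemma trim_node (l r : BTree) (a i : ℕ+) :
    (BTree.node l r).trim a i =
      if l = BTree.leaf ∧ r = BTree.leaf ∧ a = i then BTree.leaf
      else BTree.node (l.trim a i) (r.trim (a + l.numLeaves) i) := rfl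

lemma Ico_insert_top' {b i : ℕ+} (h : b ≤ i) :
    Finset.Ico b (i+1) = insert i (Finset.Ico b i) := by
  ext m
  simp only [mem_IcoP, Finset.mem_insert, PNat.add_coe, PNat.one_coe]
  have h' := (PNat.coe_le_coe _ _).2 h
  constructor
  · rintro ⟨h1, h2⟩
    by_cases hm : m = i
    · exact Or.inl hm
    · have : (m:ℕ) ≠ (i:ℕ) := fun hc => hm (PNat.coe_injective hc)
      exact Or.inr ⟨h1, by omega⟩
  · rintro (rfl | ⟨h1, h2⟩)
    · exact ⟨h', by omega⟩
    · exact ⟨h1, by omega⟩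

lemma qdesSet_leaf_empty {a i : ℕ+} (h : i ∈ BTree.qdesSet BTree.leaf a) : False := h

/-- L7: the boundary case of the main lemma. -/
lemma BS_hp_q7 (β : ℤ) : ∀ (t : BTree) (i : ℕ+), i ∈ t.qdesSet i →
    BS (i+1) (hp β t i i) = X i * hp β (t.trim i i) i i := by
  intro t
  induction t with
  | leaf => intro i h; exact absurd h (by simp [BTree.qdesSet_leaf])
  | node l r IHl IHr =>
    intro i hq
    rcases BTree.mem_qdesSet_node.1 hq with ⟨hl0, hr0, _⟩ | hil | hir
    · subst hl0; subst hr0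
      have hE : Ef β i i = 1 := Ef_one_right (le_refl (i:ℕ))
      rw [trim_node, if_pos ⟨rfl, rfl, rfl⟩, hp_node, Finset.Icc_self,
        Finset.sum_singleton, numLeaves_leaf]
      simp [hp_leaf, hE, map_mul, BS_X_lt (pn_lt_succ i)]
    · have hlne : l ≠ BTree.leaf := by
        rintro rfl
        exact qdesSet_leaf_empty hil
      obtain ⟨_, hbound⟩ := BTree.qdes_bounds l i i hil
      have hqr : i ∉ r.qdesSet (i + l.numLeaves) := by
        intro hc
        obtain ⟨h1, _⟩ := BTree.qdes_bounds r _ i hc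
        rw [PNat.add_coe] at h1
        have := l.numLeaves.pos
        omega
      have hnt : i + (l.trim i i).numLeaves + 1 = i + l.numLeaves := by
        rw [← BTree.numLeaves_trim l i i hil]
        ring
      have hsub : (i + l.numLeaves) - 1 = i + (l.trim i i).numLeaves := by
        rw [← hnt, padd_sub_one]
      rw [trim_node, if_neg (by rintro ⟨h1, _, _⟩; exact hlne h1),
        BTree.trim_eq_of_not_mem r _ i hqr,
        hp_node, Finset.Icc_self, Finset.sum_singleton, BS_term,
        BS_X_lt (pn_lt_succ i), BS_Ef_high (le_of_lt (pn_lt_succ i)),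
        IHl i hil,
        BS_hp_lt β r (i + l.numLeaves) (i+1) (i+1)
          (by rw [← PNat.coe_lt_coe, PNat.add_coe, PNat.add_coe, PNat.one_coe]; omega),
        if_neg (lt_irrefl _), hsub,
        hp_node, Finset.Icc_self, Finset.sum_singleton]
      ring
    · exfalso
      obtain ⟨h1, _⟩ := BTree.qdes_bounds r _ i hir
      rw [PNat.add_coe] at h1
      have := l.numLeaves.pos
      omega

/-- L4: the main recursion lemma on `QDes`. -/
lemma BS_hp_main (β : ℤ) : ∀ (t : BTree) (a b i : ℕ+), b ≤ i → i ∈ t.qdesSet a →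
    BS (i+1) (hp β t a b) - (1 + C β * X i) * BS i (hp β t a b) =
      X i * hp β (t.trim a i) a b := by
  intro t
  induction t with
  | leaf => intro a b i _ h; exact absurd h (by simp [BTree.qdesSet_leaf])
  | node l r IHl IHr =>
    intro a b i hbi hq
    have hbi' := (PNat.coe_le_coe _ _).2 hbi
    have hip := i.pos
    rcases BTree.mem_qdesSet_node.1 hq with ⟨hl0, hr0, hia0⟩ | hil | hir
    · -- base case: terminal node at `i`
      subst hl0; subst hr0; obtain rfl : a = i := hia0.symm
      have hS : hp β (BTree.node BTree.leaf BTree.leaf) a b =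
          ∑ m ∈ Finset.Icc b a, X m * Ef β b m := by
        rw [hp_node]
        apply Finset.sum_congr rfl
        intro m hm
        obtain ⟨hm1, hm2⟩ := mem_IccP.1 hm
        rw [numLeaves_leaf, hp_leaf, hp_leaf,
          if_pos (by exact_mod_cast hm2),
          if_pos (by rw [← PNat.coe_le_coe, PNat.add_coe, PNat.add_coe, PNat.one_coe]; omega),
          mul_one, mul_one]
      have hiIcc : a ∈ Finset.Icc b a := mem_IccP.2 ⟨hbi', le_refl _⟩
      have hBS1 : BS (a+1) (∑ m ∈ Finset.Icc b a, X m * Ef β b m) =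
          ∑ m ∈ Finset.Icc b a, X m * Ef β b m := by
        rw [map_sum]
        apply Finset.sum_congr rfl
        intro m hm
        obtain ⟨hm1, hm2⟩ := mem_IccP.1 hm
        have hma1 : m < a + 1 := by
          rw [← PNat.coe_lt_coe, PNat.add_coe, PNat.one_coe]; omega
        rw [map_mul, BS_X_lt hma1, BS_Ef_high (le_of_lt hma1)]
      have hBS2 : BS a (∑ m ∈ Finset.Icc b a, X m * Ef β b m) =
          (∑ m ∈ Finset.Icc b a, X m * Ef β b m) - X a * Ef β b a := by
        rw [map_sum, ← Finset.sum_erase_add _ _ hiIcc,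
          ← Finset.sum_erase_add _ (fun m => X m * Ef β b m) hiIcc]
        rw [map_mul, BS_X_self, zero_mul, add_zero]
        have : ∀ m ∈ (Finset.Icc b a).erase a,
            BS a (X m * Ef β b m) = X m * Ef β b m := by
          intro m hm
          obtain ⟨hne, hm'⟩ := Finset.mem_erase.1 hm
          obtain ⟨hm1, hm2⟩ := mem_IccP.1 hm'
          have hne' : (m:ℕ) ≠ (a:ℕ) := fun hc => hne (PNat.coe_injective hc)
          have hma : m < a := by rw [← PNat.coe_lt_coe]; omega
          rw [map_mul, BS_X_lt hma, BS_Ef_high (le_of_lt hma)]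
        rw [Finset.sum_congr rfl this]
        ring
      have htel : C β * (∑ m ∈ Finset.Icc b a, X m * Ef β b m) =
          (1 + C β * X a) * Ef β b a - 1 := by
        have h1 : Ef β b (a+1) = (1 + C β * X a) * Ef β b a := by
          rw [Ef, Ico_insert_top' hbi, Finset.prod_insert (by
            intro hc; exact absurd (mem_IcoP.1 hc).2 (by omega)), Ef]
        rw [Finset.mul_sum, ← h1, ← telescope β a b]
        apply Finset.sum_congr rfl
        intro m _
        ring
      rw [trim_node, if_pos ⟨rfl, rfl, rfl⟩, hp_leaf, if_pos hbi, hS, hBS1, hBS2]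
      linear_combination (-(X a)) * htel
    · -- descent inside the left subtree
      have hlne : l ≠ BTree.leaf := by rintro rfl; exact qdesSet_leaf_empty hil
      obtain ⟨hai, hbound⟩ := BTree.qdes_bounds l a i hil
      have hlp := l.numLeaves.pos
      have hqr : i ∉ r.qdesSet (a + l.numLeaves) := by
        intro hc
        obtain ⟨h1, _⟩ := BTree.qdes_bounds r _ i hc
        rw [PNat.add_coe] at h1
        omega
      have hnt : a + (l.trim a i).numLeaves + 1 = a + l.numLeaves := by
        rw [← BTree.numLeaves_trim l a i hil]; ring
      have hsub : (a + l.numLeaves) - 1 = a + (l.trim a i).numLeaves := by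
        rw [← hnt, padd_sub_one]
      rw [trim_node, if_neg (by rintro ⟨h1, _, _⟩; exact hlne h1),
        BTree.trim_eq_of_not_mem r _ i hqr,
        hp_node, hp_node, map_sum, map_sum, Finset.mul_sum, Finset.mul_sum,
        ← Finset.sum_sub_distrib]
      apply Finset.sum_congr rfl
      intro m hm
      obtain ⟨hm1, hm2⟩ := mem_IccP.1 hm
      by_cases hmi : m = i
      · subst hmi
        have haeq : a = m := le_antisymm (by rw [← PNat.coe_le_coe]; omega) hm2
        subst haeq
        rw [BS_term, BS_term, BS_X_self, zero_mul, zero_mul, zero_mul, mul_zero, sub_zero,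
          BS_X_lt (pn_lt_succ a), BS_Ef_high (le_of_lt (pn_lt_succ a)),
          BS_hp_q7 β l a hil,
          BS_hp_lt β r (a + l.numLeaves) (a+1) (a+1)
            (by rw [← PNat.coe_lt_coe, PNat.add_coe, PNat.add_coe, PNat.one_coe]; omega),
          if_neg (lt_irrefl _), hsub]
        ring
      · have hmi' : (m:ℕ) ≠ (i:ℕ) := fun hc => hmi (PNat.coe_injective hc)
        have hmlt : m < i := by rw [← PNat.coe_lt_coe]; omega
        have hmlt1 : m < i + 1 := by rw [← PNat.coe_lt_coe, PNat.add_coe, PNat.one_coe]; omega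
        have key := IHl a m i (le_of_lt hmlt) hil
        rw [BS_term, BS_term, BS_X_lt hmlt, BS_X_lt hmlt1,
          BS_Ef_high (le_of_lt hmlt), BS_Ef_high (le_of_lt hmlt1),
          BS_hp_swap β r (a + l.numLeaves) (m+1) i
            (by rw [← PNat.coe_le_coe, PNat.add_coe, PNat.one_coe]; omega) hqr,
          BS_hp_lt β r (a + l.numLeaves) (m+1) i
            (by rw [← PNat.coe_lt_coe, PNat.add_coe]; omega),
          if_neg (by rw [not_lt, ← PNat.coe_le_coe, PNat.add_coe, PNat.one_coe]; omega),
          hsub]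
        linear_combination (X m * Ef β b m * hp β r (a + (l.trim a i).numLeaves) (m+1)) * key
    · -- descent inside the right subtree
      have hrne : r ≠ BTree.leaf := by rintro rfl; exact qdesSet_leaf_empty hir
      obtain ⟨hci, hbound⟩ := BTree.qdes_bounds r _ i hir
      rw [PNat.add_coe] at hci
      have hlp := l.numLeaves.pos
      have hql : i ∉ l.qdesSet a := by
        intro hc
        obtain ⟨_, h2⟩ := BTree.qdes_bounds l a i hc
        omega
      rw [trim_node, if_neg (by rintro ⟨_, h2, _⟩; exact hrne h2),
        BTree.trim_eq_of_not_mem l a i hql,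
        hp_node, hp_node, map_sum, map_sum, Finset.mul_sum, Finset.mul_sum,
        ← Finset.sum_sub_distrib]
      apply Finset.sum_congr rfl
      intro m hm
      obtain ⟨hm1, hm2⟩ := mem_IccP.1 hm
      have hmlt : m < i := by rw [← PNat.coe_lt_coe]; omega
      have hmlt1 : m < i + 1 := by rw [← PNat.coe_lt_coe, PNat.add_coe, PNat.one_coe]; omega
      have key := IHr (a + l.numLeaves) (m+1) i
        (by rw [← PNat.coe_le_coe, PNat.add_coe, PNat.one_coe]; omega) hir
      rw [BS_term, BS_term, BS_X_lt hmlt, BS_X_lt hmlt1,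
        BS_Ef_high (le_of_lt hmlt), BS_Ef_high (le_of_lt hmlt1),
        BS_hp_high β l a m i (by omega),
        BS_hp_high β l a m (i+1) (by rw [PNat.add_coe, PNat.one_coe]; omega)]
      linear_combination (X m * Ef β b m * hp β l a m) * key
deriving instance DecidableEq for LTree

namespace LTree

lemma shape_leaf' : LTree.leaf.shape = BTree.leaf := rfl

lemma shape_node (S : Finset ℕ+) (l r : LTree) :
    (LTree.node S l r).shape = BTree.node l.shape r.shape := rfl

lemma headSet_leaf (a : ℕ+) : LTree.leaf.headSet a = {a} := rfl

lemma headSet_node (S : Finset ℕ+) (l r : LTree) (a : ℕ+) :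
    (LTree.node S l r).headSet a = S := rfl

lemma weight_node (S : Finset ℕ+) (l r : LTree) :
    (LTree.node S l r).weight = (∏ j ∈ S, (X j : MyR)) * l.weight * r.weight := rfl

lemma lsize_node (S : Finset ℕ+) (l r : LTree) :
    (LTree.node S l r).lsize = S.card + l.lsize + r.lsize := rfl

lemma shape_eq_leaf {lt : LTree} : lt.shape = BTree.leaf ↔ lt = LTree.leaf := by
  cases lt <;> simp [shape]

lemma compatible_node {S : Finset ℕ+} {l r : LTree} {a : ℕ+} :
    (LTree.node S l r).Compatible a ↔
      S.Nonempty ∧ l.Compatible a ∧ r.Compatible (a + l.shape.numLeaves) ∧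
      (∀ s ∈ S, ∀ t ∈ l.headSet a, s ≤ t) ∧
      (∀ s ∈ S, ∀ t ∈ r.headSet (a + l.shape.numLeaves), s < t) := Iff.rfl

lemma compatible_leaf {a : ℕ+} : LTree.leaf.Compatible a := trivial

lemma head_le : ∀ (lt : LTree) (a : ℕ+), lt.Compatible a → ∃ u ∈ lt.headSet a, u ≤ a := by
  intro lt
  induction lt with
  | leaf => intro a _; exact ⟨a, Finset.mem_singleton_self a, le_refl a⟩
  | node S l r IHl IHr =>
    intro a h
    obtain ⟨hne, hcl, _, hle, _⟩ := h
    obtain ⟨u, hu, hua⟩ := IHl a hcl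
    obtain ⟨s, hs⟩ := hne
    exact ⟨s, hs, le_trans (hle s hs u hu) hua⟩

lemma lsize_ge : ∀ (lt : LTree) (a : ℕ+), lt.Compatible a → lt.shape.size ≤ lt.lsize := by
  intro lt
  induction lt with
  | leaf => intro a _; exact le_refl 0
  | node S l r IHl IHr =>
    intro a h
    obtain ⟨hne, hcl, hcr, _, _⟩ := h
    have h1 := IHl a hcl
    have h2 := IHr _ hcr
    have h3 := Finset.card_pos.2 hne
    show (BTree.node l.shape r.shape).size ≤ S.card + l.lsize + r.lsize
    rw [BTree.size]
    omega

end LTree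

noncomputable def labs : BTree → ℕ+ → ℕ+ → Finset LTree
  | .leaf, a, b => if b ≤ a then {LTree.leaf} else ∅
  | .node l r, a, b =>
      (Finset.Icc b a).biUnion (fun m =>
        ((Finset.Ico b m).powerset).biUnion (fun A =>
          ((labs l a m) ×ˢ (labs r (a + l.numLeaves) (m+1))).image
            (fun p => LTree.node (insert m A) p.1 p.2)))

lemma labs_leaf (a b : ℕ+) :
    labs BTree.leaf a b = if b ≤ a then {LTree.leaf} else ∅ := rfl

lemma labs_node (l r : BTree) (a b : ℕ+) :
    labs (BTree.node l r) a b =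
      (Finset.Icc b a).biUnion (fun m =>
        ((Finset.Ico b m).powerset).biUnion (fun A =>
          ((labs l a m) ×ˢ (labs r (a + l.numLeaves) (m+1))).image
            (fun p => LTree.node (insert m A) p.1 p.2))) := rfl

lemma mem_labs : ∀ (t : BTree) (a b : ℕ+) (lt : LTree),
    lt ∈ labs t a b ↔ lt.shape = t ∧ lt.Compatible a ∧ ∀ u ∈ lt.headSet a, b ≤ u := by
  intro t
  induction t with
  | leaf =>
    intro a b lt
    rw [labs_leaf]
    by_cases h : b ≤ a
    · rw [if_pos h]
      simp only [Finset.mem_singleton]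
      constructor
      · rintro rfl
        refine ⟨rfl, trivial, ?_⟩
        intro u hu
        rw [LTree.headSet_leaf, Finset.mem_singleton] at hu
        subst hu; exact h
      · rintro ⟨hs, _, _⟩
        exact LTree.shape_eq_leaf.1 hs
    · rw [if_neg h]
      simp only [Finset.notMem_empty, false_iff]
      rintro ⟨hs, _, hu⟩
      have := LTree.shape_eq_leaf.1 hs
      subst this
      exact h (hu a (Finset.mem_singleton_self a))
  | node l r IHl IHr =>
    intro a b lt
    rw [labs_node]
    simp only [Finset.mem_biUnion, Finset.mem_image, Finset.mem_powerset, Finset.mem_product]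
    constructor
    · rintro ⟨m, hm, A, hA, ⟨l', r'⟩, ⟨hl', hr'⟩, rfl⟩
      obtain ⟨hm1, hm2⟩ := mem_IccP.1 hm
      obtain ⟨hsl, hcl, hhl⟩ := (IHl a m l').1 hl'
      obtain ⟨hsr, hcr, hhr⟩ := (IHr (a + l.numLeaves) (m+1) r').1 hr'
      have hSle : ∀ s ∈ insert m A, (s:ℕ) ≤ (m:ℕ) := by
        intro s hs
        rcases Finset.mem_insert.1 hs with rfl | hs
        · exact le_refl _
        · have := (mem_IcoP.1 (hA hs)).2; omega
      have hSge : ∀ s ∈ insert m A, b ≤ s := by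
        intro s hs
        rcases Finset.mem_insert.1 hs with rfl | hs
        · exact_mod_cast hm1
        · exact_mod_cast (mem_IcoP.1 (hA hs)).1
      refine ⟨?_, ?_, ?_⟩
      · rw [LTree.shape_node, hsl, hsr]
      · rw [LTree.compatible_node, hsl]
        refine ⟨⟨m, Finset.mem_insert_self m A⟩, hcl, hcr, ?_, ?_⟩
        · intro s hs u hu
          have h1 := hSle s hs
          have h2 := (PNat.coe_le_coe _ _).2 (hhl u hu)
          rw [← PNat.coe_le_coe]; omega
        · intro s hs u hu
          have h1 := hSle s hs
          have h2 := (PNat.coe_le_coe _ _).2 (hhr u hu)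
          rw [PNat.add_coe, PNat.one_coe] at h2
          rw [← PNat.coe_lt_coe]; omega
      · rw [LTree.headSet_node]
        exact hSge
    · rintro ⟨hs, hc, hh⟩
      cases lt with
      | leaf => exact absurd hs (by simp [LTree.shape_leaf'])
      | node S l' r' =>
        rw [LTree.shape_node] at hs
        injection hs with hsl hsr
        rw [LTree.compatible_node, hsl] at hc
        rw [LTree.headSet_node] at hh
        obtain ⟨hne, hcl, hcr, hle, hlt⟩ := hc
        have hmS := S.max'_mem hne
        obtain ⟨u0, hu0, hu0a⟩ := LTree.head_le l' a hcl
        have hma : S.max' hne ≤ a := le_trans (hle _ hmS u0 hu0) hu0a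
        refine ⟨S.max' hne, mem_IccP.2 ⟨by exact_mod_cast hh _ hmS, by exact_mod_cast hma⟩,
          S.erase (S.max' hne), ?_, (l', r'), ⟨?_, ?_⟩, ?_⟩
        · intro s hs'
          obtain ⟨hne2, hsS⟩ := Finset.mem_erase.1 hs'
          refine mem_IcoP.2 ⟨by exact_mod_cast hh s hsS, ?_⟩
          have h1 := (PNat.coe_le_coe _ _).2 (S.le_max' s hsS)
          have h2 : (s:ℕ) ≠ ((S.max' hne : ℕ+):ℕ) := fun hc2 => hne2 (PNat.coe_injective hc2)
          omega
        · exact (IHl a _ l').2 ⟨hsl, hcl, fun u hu => hle _ hmS u hu⟩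
        · exact (IHr (a + l.numLeaves) _ r').2 ⟨hsr, hcr,
            fun u hu => PNat.add_one_le_iff.2 (hlt _ hmS u hu)⟩
        · rw [Finset.insert_erase hmS]

lemma not_mem_of_subset_Ico {A : Finset ℕ+} {b m : ℕ+} (hA : A ⊆ Finset.Ico b m) : m ∉ A :=
  fun hm => absurd (mem_IcoP.1 (hA hm)).2 (lt_irrefl _)

lemma insert_max_eq {b m1 m2 : ℕ+} {A1 A2 : Finset ℕ+} (h1 : A1 ⊆ Finset.Ico b m1)
    (h2 : A2 ⊆ Finset.Ico b m2) (he : insert m1 A1 = insert m2 A2) : m1 = m2 := by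
  have e1 : m1 ∈ insert m2 A2 := he ▸ Finset.mem_insert_self m1 A1
  have e2 : m2 ∈ insert m1 A1 := he.symm ▸ Finset.mem_insert_self m2 A2
  apply PNat.coe_injective
  rcases Finset.mem_insert.1 e1 with h | h
  · exact congrArg _ h
  · have hx1 := (mem_IcoP.1 (h2 h)).2
    rcases Finset.mem_insert.1 e2 with h' | h'
    · exact (congrArg _ h').symm
    · have hx2 := (mem_IcoP.1 (h1 h')).2
      omega

lemma Ef_expand (β : ℤ) (b m : ℕ+) :
    Ef β b m = ∑ A ∈ (Finset.Ico b m).powerset,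
      (C β)^A.card * ∏ j ∈ A, (X j : MyR) := by
  rw [Ef]
  rw [show (∏ j ∈ Finset.Ico b m, (1 + C β * (X j : MyR))) =
      ∏ j ∈ Finset.Ico b m, (C β * (X j : MyR) + 1) from
    Finset.prod_congr rfl (fun j _ => by ring)]
  rw [Finset.prod_add]
  apply Finset.sum_congr rfl
  intro A hA
  rw [Finset.prod_const_one, mul_one, Finset.prod_mul_distrib, Finset.prod_const]

lemma sum_labs (β : ℤ) : ∀ (t : BTree) (a b : ℕ+),
    (∑ lt ∈ labs t a b, C (β ^ (lt.lsize - t.size)) * lt.weight) = hp β t a b := by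
  intro t
  induction t with
  | leaf =>
    intro a b
    rw [labs_leaf, hp_leaf]
    by_cases h : b ≤ a
    · rw [if_pos h, if_pos h, Finset.sum_singleton]
      show C (β ^ (0 - BTree.leaf.size)) * 1 = 1
      rw [BTree.size]
      simp
    · rw [if_neg h, if_neg h, Finset.sum_empty]
  | node l r IHl IHr =>
    intro a b
    have hd1 : (↑(Finset.Icc b a) : Set ℕ+).PairwiseDisjoint
        (fun m => ((Finset.Ico b m).powerset).biUnion (fun A =>
          ((labs l a m) ×ˢ (labs r (a + l.numLeaves) (m+1))).image
            (fun p => LTree.node (insert m A) p.1 p.2))) := by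
      intro m1 _ m2 _ hne
      apply Finset.disjoint_left.2
      intro x hx1 hx2
      obtain ⟨A1, hA1, p1, _, he1⟩ := by
        simpa only [Finset.mem_biUnion, Finset.mem_image, Finset.mem_powerset] using hx1
      obtain ⟨A2, hA2, p2, _, he2⟩ := by
        simpa only [Finset.mem_biUnion, Finset.mem_image, Finset.mem_powerset] using hx2
      rw [← he2] at he1
      injection he1 with hS _ _
      exact hne (insert_max_eq hA1 hA2 hS)
    rw [labs_node, hp_node, Finset.sum_biUnion hd1]
    apply Finset.sum_congr rfl
    intro m hm
    have hd2 : (↑((Finset.Ico b m).powerset) : Set (Finset ℕ+)).PairwiseDisjoint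
        (fun A => ((labs l a m) ×ˢ (labs r (a + l.numLeaves) (m+1))).image
          (fun p => LTree.node (insert m A) p.1 p.2)) := by
      intro A1 hA1 A2 hA2 hne
      rw [Finset.mem_coe, Finset.mem_powerset] at hA1 hA2
      apply Finset.disjoint_left.2
      intro x hx1 hx2
      obtain ⟨p1, _, he1⟩ := by
        simpa only [Finset.mem_image] using hx1
      obtain ⟨p2, _, he2⟩ := by
        simpa only [Finset.mem_image] using hx2
      rw [← he2] at he1
      injection he1 with hS _ _
      apply hne
      rw [← Finset.erase_insert (not_mem_of_subset_Ico hA1),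
        ← Finset.erase_insert (not_mem_of_subset_Ico hA2), hS]
    rw [Finset.sum_biUnion hd2]
    have hper : ∀ A ∈ (Finset.Ico b m).powerset,
        (∑ x ∈ ((labs l a m) ×ˢ (labs r (a + l.numLeaves) (m+1))).image
            (fun p => LTree.node (insert m A) p.1 p.2),
          C (β ^ (x.lsize - (BTree.node l r).size)) * x.weight) =
        ((C β)^A.card * ∏ j ∈ A, (X j : MyR)) *
          (X m * (hp β l a m * hp β r (a + l.numLeaves) (m+1))) := by
      intro A hA
      rw [Finset.mem_powerset] at hA
      have hmA : m ∉ A := not_mem_of_subset_Ico hA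
      rw [Finset.sum_image (by
        intro p _ q _ he
        injection he with _ e1 e2
        exact Prod.ext e1 e2)]
      have hterm : ∀ p ∈ (labs l a m) ×ˢ (labs r (a + l.numLeaves) (m+1)),
          C (β ^ ((LTree.node (insert m A) p.1 p.2).lsize - (BTree.node l r).size)) *
              (LTree.node (insert m A) p.1 p.2).weight =
            ((C β)^A.card * ∏ j ∈ A, (X j : MyR)) * X m *
              ((C (β ^ (p.1.lsize - l.size)) * p.1.weight) *
               (C (β ^ (p.2.lsize - r.size)) * p.2.weight)) := by
        intro p hp'
        obtain ⟨hp1, hp2⟩ := Finset.mem_product.1 hp'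
        obtain ⟨hs1, hc1, _⟩ := (mem_labs l a m p.1).1 hp1
        obtain ⟨hs2, hc2, _⟩ := (mem_labs r (a + l.numLeaves) (m+1) p.2).1 hp2
        have hge1 : l.size ≤ p.1.lsize := by
          have := LTree.lsize_ge p.1 a hc1
          rwa [hs1] at this
        have hge2 : r.size ≤ p.2.lsize := by
          have := LTree.lsize_ge p.2 (a + l.numLeaves) hc2
          rwa [hs2] at this
        rw [LTree.lsize_node, LTree.weight_node, BTree.size,
          Finset.card_insert_of_notMem hmA, Finset.prod_insert hmA]
        rw [show ((A.card + 1) + p.1.lsize + p.2.lsize) - (l.size + r.size + 1) =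
          A.card + ((p.1.lsize - l.size) + (p.2.lsize - r.size)) from by omega]
        rw [pow_add, pow_add, map_mul, map_mul, map_pow]
        ring
      rw [Finset.sum_congr rfl hterm, Finset.sum_product]
      dsimp only
      simp only [← Finset.mul_sum, ← Finset.sum_mul]
      rw [IHl a m, IHr (a + l.numLeaves) (m+1)]
      ring
    rw [Finset.sum_congr rfl hper, ← Finset.sum_mul, ← Ef_expand]
    ring
noncomputable def FH (β : ℤ) (F : IndexedForest) : MyR :=
  ∏ n ∈ F.supp, hp β (F.trees n) (F.firstLeaf n) 1

lemma mem_supp {F : IndexedForest} {n : ℕ} : n ∈ F.supp ↔ F.trees n ≠ BTree.leaf := by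
  rw [IndexedForest.supp, Set.Finite.mem_toFinset]
  exact Iff.rfl

lemma lab_off_supp (F : IndexedForest) (κ : F.Labelings) {n : ℕ} (h : n ∉ F.supp) :
    κ.1 n = LTree.leaf := by
  have h1 := κ.2.1 n
  have h2 : F.trees n = BTree.leaf := not_not.1 (fun hc => h (mem_supp.2 hc))
  rw [h2] at h1
  exact LTree.shape_eq_leaf.1 h1

lemma lab_mem (F : IndexedForest) (κ : F.Labelings) (n : ℕ) :
    κ.1 n ∈ labs (F.trees n) (F.firstLeaf n) 1 :=
  (mem_labs _ _ _ _).2 ⟨κ.2.1 n, κ.2.2 n, fun u _ => u.one_le⟩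

instance labelings_finite (F : IndexedForest) : Finite F.Labelings := by
  apply Finite.of_injective
    (f := fun κ : F.Labelings =>
      (fun n : F.supp => (⟨κ.1 n, lab_mem F κ n⟩ :
        {lt // lt ∈ labs (F.trees n) (F.firstLeaf n) 1})))
  intro κ1 κ2 h
  apply Subtype.ext; funext n
  by_cases hn : n ∈ F.supp
  · exact congrArg Subtype.val (congrFun h ⟨n, hn⟩)
  · rw [lab_off_supp F κ1 hn, lab_off_supp F κ2 hn]

lemma sum_sub_nat {s : Finset ℕ} {f g : ℕ → ℕ} (h : ∀ n ∈ s, g n ≤ f n) :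
    ∑ n ∈ s, (f n - g n) = ∑ n ∈ s, f n - ∑ n ∈ s, g n := by
  classical
  induction s using Finset.induction with
  | empty => simp
  | insert x s' hx IH =>
    rw [Finset.sum_insert hx, Finset.sum_insert hx, Finset.sum_insert hx,
      IH (fun n hn => h n (Finset.mem_insert_of_mem hn))]
    have h1 := h x (Finset.mem_insert_self x s')
    have h2 : ∑ n ∈ s', g n ≤ ∑ n ∈ s', f n :=
      Finset.sum_le_sum (fun n hn => h n (Finset.mem_insert_of_mem hn))
    omega

lemma bridge (β : ℤ) (F : IndexedForest) : groveP β F = FH β F := by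
  classical
  letI : Fintype F.Labelings := Fintype.ofFinite _
  rw [groveP, finsum_eq_sum_of_fintype, FH,
    Finset.prod_congr rfl (fun n _ => (sum_labs β (F.trees n) (F.firstLeaf n) 1).symm),
    Finset.prod_sum]
  refine Finset.sum_bij'
    (fun κ _ => fun n _ => κ.1 n)
    (fun p hp' => (⟨fun n => if h : n ∈ F.supp then p n h else LTree.leaf, by
        constructor
        · intro n
          dsimp only
          by_cases h : n ∈ F.supp
          · rw [dif_pos h]
            exact ((mem_labs _ _ _ _).1 (Finset.mem_pi.1 hp' n h)).1
          · rw [dif_neg h, LTree.shape_leaf']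
            exact (not_not.1 (fun hc => h (mem_supp.2 hc))).symm
        · intro n
          dsimp only
          by_cases h : n ∈ F.supp
          · rw [dif_pos h]
            exact ((mem_labs _ _ _ _).1 (Finset.mem_pi.1 hp' n h)).2.1
          · rw [dif_neg h]
            exact trivial⟩ : F.Labelings))
    ?hi ?hj ?left ?right ?val
  case hi =>
    intro κ _
    exact Finset.mem_pi.2 (fun n hn => lab_mem F κ n)
  case hj =>
    intro p hp'
    exact Finset.mem_univ _
  case left =>
    intro κ _
    apply Subtype.ext; funext n
    dsimp only
    by_cases h : n ∈ F.supp
    · rw [dif_pos h]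
    · rw [dif_neg h, lab_off_supp F κ h]
  case right =>
    intro p hp'
    funext n hn
    dsimp only
    exact dif_pos hn
  case val =>
    intro κ _
    have hls : ∀ n ∈ F.supp, (F.trees n).size ≤ (κ.1 n).lsize := by
      intro n _
      have := LTree.lsize_ge (κ.1 n) (F.firstLeaf n) (κ.2.2 n)
      rwa [κ.2.1 n] at this
    dsimp only
    rw [Finset.prod_attach F.supp
        (fun n => C (β ^ ((κ.1 n).lsize - (F.trees n).size)) * (κ.1 n).weight),
      Finset.prod_mul_distrib, ← map_prod, Finset.prod_pow_eq_pow_sum,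
      sum_sub_nat hls]
    rfl

lemma firstLeaf_coe (F : IndexedForest) (n : ℕ) :
    (F.firstLeaf n : ℕ) = 1 + ∑ m ∈ Finset.range n, ((F.trees m).numLeaves : ℕ) := rfl

lemma firstLeaf_succ (F : IndexedForest) (n : ℕ) :
    (F.firstLeaf (n+1) : ℕ) = (F.firstLeaf n : ℕ) + (F.trees n).numLeaves := by
  rw [firstLeaf_coe, firstLeaf_coe, Finset.sum_range_succ]
  omega

lemma firstLeaf_mono (F : IndexedForest) {m n : ℕ} (h : m ≤ n) :
    (F.firstLeaf m : ℕ) ≤ F.firstLeaf n := by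
  rw [firstLeaf_coe, firstLeaf_coe]
  have h2 : ∑ k ∈ Finset.range m, ((F.trees k).numLeaves : ℕ) ≤
      ∑ k ∈ Finset.range n, ((F.trees k).numLeaves : ℕ) :=
    Finset.sum_le_sum_of_subset (Finset.range_subset_range.2 h)
  omega

lemma next_tree (F : IndexedForest) {m n : ℕ} (h : m < n) :
    (F.firstLeaf m : ℕ) + (F.trees m).numLeaves ≤ F.firstLeaf n := by
  rw [← firstLeaf_succ]
  exact firstLeaf_mono F h

lemma qdes_unique (F : IndexedForest) {i : ℕ+} {n0 n : ℕ}
    (h0 : i ∈ (F.trees n0).qdesSet (F.firstLeaf n0)) (hne : n ≠ n0) :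
    i ∉ (F.trees n).qdesSet (F.firstLeaf n) := by
  intro hn
  obtain ⟨ha0, hb0⟩ := BTree.qdes_bounds _ _ _ h0
  obtain ⟨ha, hb⟩ := BTree.qdes_bounds _ _ _ hn
  rcases lt_or_gt_of_ne hne with h | h
  · have := next_tree F h
    omega
  · have := next_tree F h
    omega

lemma trim_trees (F : IndexedForest) (i : ℕ+) (n : ℕ) :
    (F.trim i).trees n = (F.trees n).trim (F.firstLeaf n) i := rfl

lemma trim_supp (F : IndexedForest) (i : ℕ+) : (F.trim i).supp ⊆ F.supp := by
  intro n hn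
  refine mem_supp.2 (fun h => mem_supp.1 hn ?_)
  rw [trim_trees, h]
  rfl

lemma FH_eq (β : ℤ) (F : IndexedForest) {s : Finset ℕ} (hs : F.supp ⊆ s) :
    FH β F = ∏ n ∈ s, hp β (F.trees n) (F.firstLeaf n) 1 := by
  rw [FH]
  apply Finset.prod_subset hs
  intro n _ hn
  rw [not_not.1 (fun hc => hn (mem_supp.2 hc)), hp_leaf, if_pos (F.firstLeaf n).one_le]

lemma firstLeaf_trim (F : IndexedForest) {i : ℕ+} {n0 : ℕ}
    (h0 : i ∈ (F.trees n0).qdesSet (F.firstLeaf n0)) (n : ℕ) :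
    ((F.trim i).firstLeaf n : ℕ) =
      if n ≤ n0 then (F.firstLeaf n : ℕ) else (F.firstLeaf n : ℕ) - 1 := by
  rw [firstLeaf_coe, firstLeaf_coe]
  by_cases hn : n ≤ n0
  · rw [if_pos hn]
    congr 1
    apply Finset.sum_congr rfl
    intro m hm
    have hmn0 : m ≠ n0 := by
      have := Finset.mem_range.1 hm
      omega
    rw [trim_trees, BTree.trim_eq_of_not_mem _ _ _ (qdes_unique F h0 hmn0)]
  · rw [if_neg hn]
    have hn0 : n0 ∈ Finset.range n := Finset.mem_range.2 (by omega)
    rw [← Finset.sum_erase_add _ _ hn0, ← Finset.sum_erase_add _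
      (fun m => ((F.trees m).numLeaves : ℕ)) hn0]
    have h1 : ∑ m ∈ (Finset.range n).erase n0, (((F.trim i).trees m).numLeaves : ℕ) =
        ∑ m ∈ (Finset.range n).erase n0, ((F.trees m).numLeaves : ℕ) := by
      apply Finset.sum_congr rfl
      intro m hm
      rw [trim_trees, BTree.trim_eq_of_not_mem _ _ _ (qdes_unique F h0 (Finset.mem_erase.1 hm).1)]
    have h2 : (((F.trim i).trees n0).numLeaves : ℕ) + 1 = ((F.trees n0).numLeaves : ℕ) := by
      rw [trim_trees]
      have := BTree.numLeaves_trim _ _ _ h0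
      have := congrArg (fun x : ℕ+ => (x:ℕ)) this
      simpa [PNat.add_coe] using this
    omega

lemma cc_hp (β : ℤ) {t : BTree} (h : t ≠ BTree.leaf) (a b : ℕ+) :
    constantCoeff (hp β t a b) = 0 := by
  cases t with
  | leaf => exact absurd rfl h
  | node l r =>
    rw [hp_node, map_sum]
    apply Finset.sum_eq_zero
    intro m _
    rw [map_mul, map_mul, map_mul, constantCoeff_X, zero_mul, zero_mul, zero_mul]

lemma claimB (β : ℤ) (F : IndexedForest) (i : ℕ+)
    (h : ∀ n : ℕ, i ∉ (F.trees n).qdesSet (F.firstLeaf n)) :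
    BS (i+1) (FH β F) = BS i (FH β F) := by
  rw [FH, map_prod, map_prod]
  exact Finset.prod_congr rfl (fun n _ => BS_hp_swap β _ _ _ i i.one_le (h n))

lemma claimA (β : ℤ) (F : IndexedForest) (i : ℕ+) (n0 : ℕ)
    (h0 : i ∈ (F.trees n0).qdesSet (F.firstLeaf n0)) :
    BS (i+1) (FH β F) - (1 + C β * X i) * BS i (FH β F) = X i * FH β (F.trim i) := by
  have hn0s : n0 ∈ F.supp := mem_supp.2 (by
    intro hc
    rw [hc] at h0
    exact h0)
  obtain ⟨ha0, hb0⟩ := BTree.qdes_bounds _ _ _ h0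
  have key : ∀ n ∈ F.supp.erase n0, ∀ k : ℕ+, ((k:ℕ) = i ∨ (k:ℕ) = (i:ℕ)+1) →
      BS k (hp β (F.trees n) (F.firstLeaf n) 1) =
        hp β ((F.trim i).trees n) ((F.trim i).firstLeaf n) 1 := by
    intro n hn k hk
    obtain ⟨hne, _⟩ := Finset.mem_erase.1 hn
    rw [trim_trees, BTree.trim_eq_of_not_mem _ _ _ (qdes_unique F h0 hne)]
    have hfl := firstLeaf_trim F h0 n
    rcases lt_or_gt_of_ne hne with hlt | hgt
    · -- n < n0
      have hbnd := next_tree F hlt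
      have hfl' : (F.trim i).firstLeaf n = F.firstLeaf n := by
        apply PNat.coe_injective
        rw [hfl, if_pos (le_of_lt hlt)]
      rw [hfl', BS_hp_high β _ _ _ k (by omega)]
    · -- n0 < n
      have hbnd := next_tree F hgt
      have h1a : (1:ℕ) < F.firstLeaf n := by omega
      have hfl' : (F.trim i).firstLeaf n = F.firstLeaf n - 1 := by
        apply PNat.coe_injective
        rw [hfl, if_neg (by omega), coe_sub_one h1a]
      rw [hfl', BS_hp_lt β _ _ _ k (by rw [← PNat.coe_lt_coe]; omega),
        if_neg (not_lt.2 k.one_le)]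
  have hP1 : BS (i+1) (∏ n ∈ F.supp.erase n0, hp β (F.trees n) (F.firstLeaf n) 1) =
      ∏ n ∈ F.supp.erase n0, hp β ((F.trim i).trees n) ((F.trim i).firstLeaf n) 1 := by
    rw [map_prod]
    exact Finset.prod_congr rfl (fun n hn => key n hn (i+1)
      (Or.inr (by rw [PNat.add_coe, PNat.one_coe])))
  have hP2 : BS i (∏ n ∈ F.supp.erase n0, hp β (F.trees n) (F.firstLeaf n) 1) =
      ∏ n ∈ F.supp.erase n0, hp β ((F.trim i).trees n) ((F.trim i).firstLeaf n) 1 := by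
    rw [map_prod]
    exact Finset.prod_congr rfl (fun n hn => key n hn i (Or.inl rfl))
  have hmain := BS_hp_main β (F.trees n0) (F.firstLeaf n0) 1 i i.one_le h0
  have hfl0 : (F.trim i).firstLeaf n0 = F.firstLeaf n0 := by
    apply PNat.coe_injective
    rw [firstLeaf_trim F h0 n0, if_pos (le_refl n0)]
  have hRHS : FH β (F.trim i) =
      (∏ n ∈ F.supp.erase n0, hp β ((F.trim i).trees n) ((F.trim i).firstLeaf n) 1) *
        hp β ((F.trees n0).trim (F.firstLeaf n0) i) (F.firstLeaf n0) 1 := by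
    rw [FH_eq β (F.trim i) (trim_supp F i), ← Finset.prod_erase_mul _ _ hn0s,
      hfl0, trim_trees]
  rw [FH, ← Finset.prod_erase_mul _ _ hn0s, map_mul, map_mul, hP1, hP2, hRHS]
  linear_combination (∏ n ∈ F.supp.erase n0,
    hp β ((F.trim i).trees n) ((F.trim i).firstLeaf n) 1) * hmain
/-- the grove polynomials satisfy `G_∅ = 1`, `ct G_F = 0` for
`F ≠ ∅`, and `π̃_i G_F = G_(F/i)` for `i ∈ QDes F`,
`π̃_i G_F = -β·R_i G_F` for `i ∉ QDes F`, where `π̃_i f = T_i((1+βx_(i+1))f)`. -/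
theorem stmt3 (β : ℤ) (T : ℕ+ → MyR → MyR)
    (hT : ∀ (i : ℕ+) (f : MyR), (X i : MyR) * T i f = BS (i + 1) f - BS i f) :
    groveP β IndexedForest.empty = 1 ∧
    (∀ F : IndexedForest, F ≠ IndexedForest.empty →
      constantCoeff (groveP β F) = 0) ∧
    ∀ (F : IndexedForest) (i : ℕ+),
      (i ∈ F.qdes →
        T i ((1 + C β * X (i + 1)) * groveP β F) = groveP β (F.trim i)) ∧
      (i ∉ F.qdes →
        T i ((1 + C β * X (i + 1)) * groveP β F) =
          -(C β) * BS i (groveP β F)) := by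
  have hTchar : ∀ (i : ℕ+) (f g : MyR), BS (i+1) f - BS i f = X i * g → T i f = g := by
    intro i f g h
    apply mul_left_cancel₀ (X_ne_zero i : (X i : MyR) ≠ 0)
    rw [hT i f, h]
  have e1 : ∀ (i : ℕ+) (G : MyR),
      BS (i+1) ((1 + C β * X (i+1)) * G) = BS (i+1) G := by
    intro i G
    rw [map_mul, map_add, map_one, map_mul, BS_C, BS_X_self, mul_zero, add_zero, one_mul]
  have e2 : ∀ (i : ℕ+) (G : MyR),
      BS i ((1 + C β * X (i+1)) * G) = (1 + C β * X i) * BS i G := by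
    intro i G
    rw [map_mul, map_add, map_one, map_mul, BS_C, BS_X_gt (pn_lt_succ i), padd_sub_one]
  refine ⟨?_, ?_, ?_⟩
  · rw [bridge]
    have hsupp : (IndexedForest.empty).supp = ∅ := by
      ext n
      rw [mem_supp]
      simp [IndexedForest.empty]
    rw [FH, hsupp, Finset.prod_empty]
  · intro F hF
    obtain ⟨n, hn⟩ : ∃ n, F.trees n ≠ BTree.leaf := by
      by_contra h
      push_neg at h
      apply hF
      cases F with
      | mk trees fin =>
        simp only [IndexedForest.empty, IndexedForest.mk.injEq]
        funext n
        exact h n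
    rw [bridge, FH, map_prod]
    exact Finset.prod_eq_zero (mem_supp.2 hn) (cc_hp β hn _ _)
  · intro F i
    constructor
    · intro hq
      obtain ⟨n0, h0⟩ := Set.mem_iUnion.1 hq
      apply hTchar
      rw [e1, e2, bridge β F, bridge β (F.trim i)]
      exact claimA β F i n0 h0
    · intro hq
      have h : ∀ n : ℕ, i ∉ (F.trees n).qdesSet (F.firstLeaf n) :=
        fun n hn => hq (Set.mem_iUnion.2 ⟨n, hn⟩)
      apply hTchar
      rw [e1, e2, bridge β F, claimB β F i h]
      ring
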